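/- arXiv:0706.3246 — 8 statements merged into one kernel-verified Lean document; each statement's English description precedes it below -/
import Mathlib

section
/- If G is a finite group with trivial center, then the centralizer of the derived subgroup is contained in the derived subgroup: C_G(G') ≤ G'. -/
section Key

variable {A : Type*} [CommGroup A]

/-- Iterate of a monoid endomorphism, as a monoid hom. -/
private def iterHom (f : A →* A) : ℕ → (A →* A)
  | 0 => MonoidHom.id A
  | n + 1 => f.comp (iterHom f n)

private lemma iterHom_succ_apply (f : A →* A) (n : ℕ) (a : A) :
    iterHom f (n + 1) a = f (iterHom f n a) := rfl

private lemma iterHom_succ_apply' (f : A →* A) (n : ℕ) (a : A) :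
    iterHom f (n + 1) a = iterHom f n (f a) := by
  induction n with
  | zero => rfl
  | succ n ih => rw [iterHom_succ_apply, ih, ← iterHom_succ_apply]

private lemma iterHom_add_apply (f : A →* A) (m n : ℕ) (a : A) :
    iterHom f (m + n) a = iterHom f m (iterHom f n a) := by
  induction m with
  | zero => rw [Nat.zero_add]; rfl
  | succ m ih =>
      rw [show m + 1 + n = (m + n) + 1 by ring, iterHom_succ_apply, ih, ← iterHom_succ_apply]

private lemma iterHom_comm (f : A →* A) (τ : A →* A) (h : ∀ a, τ (f a) = f (τ a)) (n : ℕ)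
    (a : A) : τ (iterHom f n a) = iterHom f n (τ a) := by
  induction n with
  | zero => rfl
  | succ n ih => rw [iterHom_succ_apply, h, ih, ← iterHom_succ_apply]

private lemma iterHom_mem (f : A →* A) {B : Subgroup A} (hB : ∀ b ∈ B, f b ∈ B) (n : ℕ)
    {b : A} (hb : b ∈ B) : iterHom f n b ∈ B := by
  induction n with
  | zero => exact hb
  | succ n ih => rw [iterHom_succ_apply]; exact hB _ ih

/-- the image subgroups under iterates form a decreasing chain -/
private lemma map_iterHom_le (f : A →* A) {B : Subgroup A} (hB : ∀ b ∈ B, f b ∈ B)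
    (n k : ℕ) (h : n ≤ k) : B.map (iterHom f k) ≤ B.map (iterHom f n) := by
  induction k with
  | zero => rw [Nat.le_zero.mp h]
  | succ k ih =>
      rcases Nat.lt_or_ge n (k + 1) with hlt | hge
      · refine le_trans ?_ (ih (by omega))
        rintro x ⟨b, hb, rfl⟩
        exact ⟨f b, hB b hb, (iterHom_succ_apply' f k b).symm⟩
      · rw [Nat.le_antisymm h hge]

/-- The "difference" endomorphism `a ↦ σ a * a⁻¹`. -/
private def dd (σ : A →* A) : A →* A := σ * (MonoidHom.id A)⁻¹

private lemma dd_apply (σ : A →* A) (a : A) : dd σ a = σ a * a⁻¹ := rfl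

private lemma dd_comm {σ τ : A →* A} (h : ∀ a, τ (σ a) = σ (τ a)) (a : A) :
    τ (dd σ a) = dd σ (τ a) := by
  simp only [dd_apply, map_mul, map_inv, h]

private lemma dd_mem {σ : A →* A} {B : Subgroup A} (hB : ∀ b ∈ B, σ b ∈ B) :
    ∀ b ∈ B, dd σ b ∈ B := fun b hb => by
  rw [dd_apply]; exact mul_mem (hB b hb) (inv_mem hb)

private lemma dd_eq_one_iff (σ : A →* A) (a : A) : dd σ a = 1 ↔ σ a = a := by
  rw [dd_apply, mul_inv_eq_one]

private theorem key [Finite A] (S : Set (A →* A)) (hSfin : S.Finite)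
    (hcomm : ∀ σ ∈ S, ∀ τ ∈ S, ∀ a : A, σ (τ a) = τ (σ a))
    (hfix : ∀ a : A, (∀ σ ∈ S, σ a = a) → a = 1) (a : A) :
    a ∈ Subgroup.closure {x : A | ∃ σ ∈ S, ∃ b : A, x = σ b * b⁻¹} := by
  set T := Subgroup.closure {x : A | ∃ σ ∈ S, ∃ b : A, x = σ b * b⁻¹} with hT
  suffices aux : ∀ n (B : Subgroup A), Nat.card B ≤ n →
      (∀ σ ∈ S, ∀ b ∈ B, σ b ∈ B) → B ≤ T by
    exact aux (Nat.card (⊤ : Subgroup A)) ⊤ le_rfl (fun σ _ b _ => trivial) trivial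
  intro n
  induction n with
  | zero =>
      intro B hcard _
      have : 0 < Nat.card B := Nat.card_pos
      omega
  | succ n ih =>
      intro B hcard hBinv
      by_cases hnil : ∀ σ ∈ S, ∃ m, B.map (iterHom (dd σ) m) = ⊥
      · -- all difference maps nilpotent on B : B must be ⊥
        rcases eq_or_ne B ⊥ with hB | hB
        · rw [hB]; exact bot_le
        exfalso
        -- build a nontrivial subgroup fixed pointwise by every σ in S
        have claim : ∀ s : Finset (A →* A), ↑s ⊆ S → ∃ B' : Subgroup A, B' ≠ ⊥ ∧ B' ≤ B ∧
            (∀ σ ∈ S, ∀ b ∈ B', σ b ∈ B') ∧ (∀ σ ∈ s, ∀ b ∈ B', σ b = b) := by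
          classical
          intro s hs
          induction s using Finset.induction_on with
          | empty => exact ⟨B, hB, le_rfl, hBinv, by simp⟩
          | @insert σ s hσs ihs =>
              have hσS : σ ∈ S := hs (Finset.mem_insert_self σ s)
              obtain ⟨B', hB'ne, hB'le, hB'inv, hB'fix⟩ :=
                ihs (fun x hx => hs (Finset.mem_insert_of_mem hx))
              have hB'dd : ∀ b ∈ B', dd σ b ∈ B' := dd_mem (hB'inv σ hσS)
              -- dd σ is nilpotent on B'
              have hnilB' : ∃ m, B'.map (iterHom (dd σ) m) = ⊥ := by
                obtain ⟨m, hm⟩ := hnil σ hσS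
                exact ⟨m, le_bot_iff.mp (hm ▸ Subgroup.map_mono hB'le)⟩
              set m₀ := sInf {m | B'.map (iterHom (dd σ) m) = ⊥} with hm₀
              have hm₀mem : B'.map (iterHom (dd σ) m₀) = ⊥ := Nat.sInf_mem hnilB'
              have hm₀pos : 0 < m₀ := by
                rcases Nat.eq_zero_or_pos m₀ with h0 | h
                · exfalso
                  apply hB'ne
                  have h1 : B'.map (iterHom (dd σ) 0) = ⊥ := by rw [← h0]; exact hm₀mem
                  rwa [show iterHom (dd σ) 0 = MonoidHom.id A from rfl, Subgroup.map_id] at h1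
                · exact h
              have hprev : B'.map (iterHom (dd σ) (m₀ - 1)) ≠ ⊥ := by
                have hlt : m₀ - 1 < sInf {m | B'.map (iterHom (dd σ) m) = ⊥} := by omega
                exact Nat.notMem_of_lt_sInf hlt
              refine ⟨B' ⊓ (dd σ).ker, ?_, le_trans inf_le_left hB'le, ?_, ?_⟩
              · -- nontrivial: the (m₀-1)-st image sits inside it
                intro hbot
                apply hprev
                rw [eq_bot_iff] at hbot ⊢
                refine le_trans ?_ hbot
                rintro x ⟨b, hb, rfl⟩
                refine Subgroup.mem_inf.mpr ⟨iterHom_mem _ hB'dd _ hb, ?_⟩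
                rw [MonoidHom.mem_ker, ← iterHom_succ_apply,
                  show m₀ - 1 + 1 = m₀ by omega]
                have : iterHom (dd σ) m₀ b ∈ B'.map (iterHom (dd σ) m₀) := ⟨b, hb, rfl⟩
                rw [hm₀mem] at this
                exact this
              · -- invariance under all τ ∈ S
                intro τ hτS b hb
                rw [Subgroup.mem_inf] at hb ⊢
                refine ⟨hB'inv τ hτS b hb.1, ?_⟩
                rw [MonoidHom.mem_ker, ← dd_comm (hcomm τ hτS σ hσS), hb.2, map_one]
              · -- fixed pointwise by everything in insert σ s
                intro τ hτ b hb
                rw [Subgroup.mem_inf] at hb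
                rcases Finset.mem_insert.mp hτ with rfl | hτs
                · exact (dd_eq_one_iff τ b).mp hb.2
                · exact hB'fix τ hτs b hb.1
        obtain ⟨B', hB'ne, _, _, hB'fix⟩ := claim hSfin.toFinset (by simp)
        obtain ⟨⟨b, hb⟩, hbne⟩ := Subgroup.ne_bot_iff_exists_ne_one.mp hB'ne
        apply hbne
        apply Subtype.ext
        refine hfix b (fun σ hσ => hB'fix σ (hSfin.mem_toFinset.mpr hσ) b hb)
      · -- some dd σ is not nilpotent on B : Fitting decomposition
        push_neg at hnil
        obtain ⟨σ, hσS, hσnotnil⟩ := hnil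
        set f := dd σ with hf
        have hfB : ∀ b ∈ B, f b ∈ B := dd_mem (hBinv σ hσS)
        set M : ℕ → Subgroup A := fun k => B.map (iterHom f k) with hM
        -- find a stabilization point n₀ ≥ 1 with M n₀ = M (2 n₀)
        set c : ℕ → ℕ := fun k => Nat.card (M (k + 1)) with hc
        obtain ⟨k₀, hk₀⟩ : ∃ k₀, c k₀ = sInf (Set.range c) :=
          Nat.sInf_mem (Set.range_nonempty c)
        have hmin : ∀ k, c k₀ ≤ c k := fun k => hk₀ ▸ Nat.sInf_le ⟨k, rfl⟩
        set n₀ := k₀ + 1 with hn₀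
        have hstab : M (n₀ + n₀) = M n₀ := by
          refine Subgroup.eq_of_le_of_card_ge
            (map_iterHom_le f hfB n₀ (n₀ + n₀) (by omega)) ?_
          have : n₀ + n₀ = (k₀ + 1 + k₀) + 1 := by omega
          rw [this]
          exact hmin (k₀ + 1 + k₀)
        have hMn₀ne : M n₀ ≠ ⊥ := hσnotnil n₀
        -- the kernel part
        set K := B ⊓ (iterHom f n₀).ker with hK
        have hKcard : Nat.card K < Nat.card B := by
          set g := (iterHom f n₀).domRestrict B with hg
          have hker : Nat.card g.ker = Nat.card K := by
            rw [hg, MonoidHom.ker_domRestrict]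
            have hKle : K ≤ B := inf_le_left
            have e := Subgroup.subgroupOfEquivOfLe hKle
            have heq : ((iterHom f n₀).ker).subgroupOf B = K.subgroupOf B := by
              ext x
              simp [Subgroup.mem_subgroupOf, hK, x.2]
            rw [heq]
            exact Nat.card_congr e.toEquiv
          have hrange : g.range = M n₀ := by
            rw [hg, hM]
            exact MonoidHom.domRestrict_range (K := B) (iterHom f n₀)
          have hcardeq : Nat.card B = Nat.card (B ⧸ g.ker) * Nat.card g.ker :=
            Subgroup.card_eq_card_quotient_mul_card_subgroup g.ker
          have hquot : Nat.card (B ⧸ g.ker) = Nat.card g.range :=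
            Nat.card_congr (QuotientGroup.quotientKerEquivRange g).toEquiv
          have hr2 : 2 ≤ Nat.card g.range := by
            rw [hrange]
            have h1 : Nat.card (M n₀) ≠ 1 := fun h => hMn₀ne (Subgroup.eq_bot_of_card_eq _ h)
            have : 0 < Nat.card (M n₀) := Nat.card_pos
            omega
          have hBeq : Nat.card B = Nat.card g.range * Nat.card K := by
            rw [hcardeq, hquot, hker]
          have hKpos : 0 < Nat.card K := Nat.card_pos
          have h2K : 2 * Nat.card K ≤ Nat.card B := by
            rw [hBeq]
            exact Nat.mul_le_mul_right _ hr2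
          omega
        have hKinv : ∀ τ ∈ S, ∀ b ∈ K, τ b ∈ K := by
          intro τ hτ b hb
          rw [Subgroup.mem_inf] at hb ⊢
          obtain ⟨hb1, hb2⟩ := hb
          refine ⟨hBinv τ hτ b hb1, ?_⟩
          rw [MonoidHom.mem_ker] at hb2 ⊢
          rw [← iterHom_comm f τ (fun x => dd_comm (hcomm τ hτ σ hσS) x) n₀ b, hb2, map_one]
        have hKT : K ≤ T := by
          apply ih
          · omega
          · exact hKinv
        -- decompose each b ∈ B as (kernel part) * (image part)
        intro b hb
        have h1 : iterHom f n₀ b ∈ M n₀ := ⟨b, hb, rfl⟩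
        rw [← hstab] at h1
        obtain ⟨b', hb', hb'eq⟩ := h1
        have hkmem : b * (iterHom f n₀ b')⁻¹ ∈ K := by
          rw [Subgroup.mem_inf]
          constructor
          · exact mul_mem hb (inv_mem (iterHom_mem f hfB n₀ hb'))
          · rw [MonoidHom.mem_ker, map_mul, map_inv, ← iterHom_add_apply, hb'eq,
              mul_inv_eq_one]
        have himgT : iterHom f n₀ b' ∈ T := by
          have : iterHom f n₀ b' = f (iterHom f (n₀ - 1) b') := by
            rw [← iterHom_succ_apply, show n₀ - 1 + 1 = n₀ by omega]
          rw [this]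
          exact Subgroup.subset_closure ⟨σ, hσS, iterHom f (n₀ - 1) b', rfl⟩
        have := mul_mem (hKT hkmem) himgT
        rwa [inv_mul_cancel_right] at this

end Key

open scoped commutatorElement

theorem stmt_4 (G : Type*) [Group G] [Finite G]
    (hZ : Subgroup.center G = ⊥) :
    Subgroup.centralizer (commutator G : Set G) ≤ commutator G := by
  set C := Subgroup.centralizer (commutator G : Set G) with hC
  -- elements of C commute with everything in the commutator subgroup
  have hcent : ∀ c ∈ C, ∀ x ∈ commutator G, x * c = c * x := by
    intro c hc x hx
    exact Subgroup.mem_centralizer_iff.mp hc x hx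
  have hGC : commutator G ≤ Subgroup.centralizer (C : Set G) := by
    intro x hx
    rw [Subgroup.mem_centralizer_iff]
    intro h hh
    exact (hcent h hh x hx).symm
  -- C is commutative, by the three subgroups lemma and triviality of the center
  have habelian : ∀ a b : G, a ∈ C → b ∈ C → a * b = b * a := by
    have hcomm1 : ⁅C, (⊤ : Subgroup G)⁆ ≤ Subgroup.centralizer (C : Set G) := by
      refine le_trans ?_ hGC
      rw [commutator_def]
      exact Subgroup.commutator_mono le_top le_rfl
    have hcomm2 : ⁅(⊤ : Subgroup G), C⁆ ≤ Subgroup.centralizer (C : Set G) := by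
      refine le_trans ?_ hGC
      rw [commutator_def]
      exact Subgroup.commutator_mono le_rfl le_top
    have h1 : ⁅⁅C, (⊤ : Subgroup G)⁆, C⁆ = ⊥ :=
      Subgroup.commutator_eq_bot_iff_le_centralizer.mpr hcomm1
    have h2 : ⁅⁅(⊤ : Subgroup G), C⁆, C⁆ = ⊥ :=
      Subgroup.commutator_eq_bot_iff_le_centralizer.mpr hcomm2
    have h3 : ⁅⁅C, C⁆, (⊤ : Subgroup G)⁆ = ⊥ :=
      Subgroup.commutator_commutator_eq_bot_of_rotate h1 h2
    have hCC : ⁅C, C⁆ = ⊥ := by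
      rw [Subgroup.commutator_eq_bot_iff_le_centralizer] at h3
      rw [eq_bot_iff, ← hZ, ← Subgroup.centralizer_univ]
      simpa using h3
    intro a b ha hb
    have := Subgroup.commutator_mem_commutator ha hb
    rw [hCC, Subgroup.mem_bot] at this
    exact commutatorElement_eq_one_iff_mul_comm.mp this
  -- C is closed under conjugation
  have hconj : ∀ (g c : G), c ∈ C → g * c * g⁻¹ ∈ C := by
    intro g c hc
    rw [hC, Subgroup.mem_centralizer_iff]
    intro x hx
    have hnormal : (commutator G).Normal := inferInstance
    have hx' : g⁻¹ * x * g ∈ commutator G := by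
      simpa using hnormal.conj_mem x hx g⁻¹
    have hcc := hcent c hc _ hx'
    have e1 : x * (g * c * g⁻¹) = g * ((g⁻¹ * x * g) * c) * g⁻¹ := by group
    rw [e1, hcc]
    group
  letI : CommGroup C := { (inferInstance : Group C) with
    mul_comm := fun a b => Subtype.ext (habelian a.1 b.1 a.2 b.2) }
  -- conjugation endomorphisms of C
  let σf : ∀ g : G, C →* C := fun g =>
    { toFun := fun c => ⟨g * c * g⁻¹, hconj g c c.2⟩
      map_one' := by
        apply Subtype.ext
        simp
      map_mul' := fun a b => by
        apply Subtype.ext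
        push_cast
        group }
  have hσf : ∀ (g : G) (c : C), (σf g c : G) = g * c * g⁻¹ := fun g c => rfl
  set S : Set (C →* C) := Set.range σf with hS
  have hSfin : S.Finite := Set.finite_range σf
  have hScomm : ∀ σ ∈ S, ∀ τ ∈ S, ∀ a : C, σ (τ a) = τ (σ a) := by
    rintro σ ⟨g, rfl⟩ τ ⟨h, rfl⟩ c
    apply Subtype.ext
    rw [hσf, hσf, hσf, hσf]
    have hmem : g⁻¹ * h⁻¹ * g * h ∈ commutator G := by
      have heq : g⁻¹ * h⁻¹ * g * h = ⁅g⁻¹, h⁻¹⁆ := by group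
      rw [heq, commutator_def]
      exact Subgroup.commutator_mem_commutator (Subgroup.mem_top _) (Subgroup.mem_top _)
    have hw := hcent c c.2 _ hmem
    have e1 : g * (h * (c : G) * h⁻¹) * g⁻¹ =
        h * g * ((g⁻¹ * h⁻¹ * g * h) * (c : G)) * h⁻¹ * g⁻¹ := by group
    rw [e1, hw]
    group
  have hSfix : ∀ a : C, (∀ σ ∈ S, σ a = a) → a = 1 := by
    intro a ha
    have hcenter : (a : G) ∈ Subgroup.center G := by
      rw [Subgroup.mem_center_iff]
      intro g
      have h1 : (σf g a : G) = (a : G) := congrArg Subtype.val (ha (σf g) ⟨g, rfl⟩)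
      rw [hσf] at h1
      have h2 : g * (a : G) = (g * (a : G) * g⁻¹) * g := by group
      rw [h2, h1]
    rw [hZ, Subgroup.mem_bot] at hcenter
    exact Subtype.ext hcenter
  intro c hc
  have hmem := key S hSfin hScomm hSfix ⟨c, hc⟩
  have hle : Subgroup.closure {x : C | ∃ σ ∈ S, ∃ b : C, x = σ b * b⁻¹} ≤
      (commutator G).comap C.subtype := by
    rw [Subgroup.closure_le]
    rintro x ⟨σ, ⟨g, rfl⟩, b, rfl⟩
    simp only [SetLike.mem_coe, Subgroup.mem_comap]
    have hx : (C.subtype (σf g b * b⁻¹) : G) = ⁅g, (b : G)⁆ := by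
      rw [commutatorElement_def]
      show ((σf g b * b⁻¹ : C) : G) = _
      push_cast
      rw [hσf]
    rw [hx, commutator_def]
    exact Subgroup.commutator_mem_commutator (Subgroup.mem_top _) (Subgroup.mem_top _)
  have := hle hmem
  rwa [Subgroup.mem_comap] at this
end

section
/- If G is a finite group with trivial center and the derived subgroup G' can be generated by d elements, then |G| ≤ |G'|^(d+1). -/
open Subgroup MulAction

private lemma mem_of_pows_mem {M : Type*} [Group M] (B : Subgroup M) (x : M) {m n : ℕ}
    (hco : Nat.gcd m n = 1) (h1 : x ^ m ∈ B) (h2 : x ^ n ∈ B) : x ∈ B := by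
  have hb := Nat.gcd_eq_gcd_ab m n
  have hx : x = (x ^ m) ^ (Nat.gcdA m n) * (x ^ n) ^ (Nat.gcdB m n) := by
    rw [← zpow_natCast x m, ← zpow_natCast x n, ← zpow_mul, ← zpow_mul, ← zpow_add]
    rw [show (m : ℤ) * Nat.gcdA m n + (n : ℤ) * Nat.gcdB m n = 1 by rw [← hb, hco]; norm_num]
    exact (zpow_one x).symm
  rw [hx]
  exact B.mul_mem (B.zpow_mem h1 _) (B.zpow_mem h2 _)

private def pPart (M : Type*) [CommGroup M] (p : ℕ) : Subgroup M where
  carrier := {z : M | ∃ n, z ^ p ^ n = 1}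
  one_mem' := ⟨0, one_pow _⟩
  mul_mem' := by
    rintro z w ⟨n, hn⟩ ⟨n', hn'⟩
    exact ⟨n + n', by rw [mul_pow, pow_add, pow_mul, hn, one_pow, one_mul,
      mul_comm (p ^ n) (p ^ n'), pow_mul, hn', one_pow]⟩
  inv_mem' := by
    rintro z ⟨n, hn⟩
    exact ⟨n, by rw [inv_pow, hn, inv_one]⟩

private lemma mem_pPart {M : Type*} [CommGroup M] {p : ℕ} {z : M} :
    z ∈ pPart M p ↔ ∃ n, z ^ p ^ n = 1 := Iff.rfl

private lemma keyL1 {A M : Type*} [CommGroup A] [Finite A] [CommGroup M] [Finite M]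
    [MulDistribMulAction A M]
    (hfix : ∀ m : M, (∀ a : A, a • m = m) → m = 1) (m : M) :
    m ∈ Subgroup.closure {x : M | ∃ (a : A) (y : M), (a • y) * y⁻¹ = x} := by
  classical
  set B := Subgroup.closure {x : M | ∃ (a : A) (y : M), (a • y) * y⁻¹ = x} with hBdef
  have hprim : ∀ p : ℕ, p.Prime → ∀ x : M, (∃ n, x ^ p ^ n = 1) → x ∈ B := by
    intro p hp x hxp
    haveI : Fact p.Prime := ⟨hp⟩
    haveI : Fintype A := Fintype.ofFinite A
    set k := (Nat.card A).factorization p with hkdef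
    set Fx : Subgroup M :=
      { carrier := {z : M | ∀ a : A, (a ^ p ^ k) • z = z}
        one_mem' := fun a => smul_one _
        mul_mem' := by
          intro z w hz hw
          intro a
          rw [smul_mul', hz a, hw a]
        inv_mem' := by
          intro z hz a
          rw [smul_inv', hz a] } with hFxdef
    set N : Subgroup M := pPart M p ⊓ Fx with hNdef
    have hNp : IsPGroup p ↥N := by
      rintro ⟨z, hz⟩
      obtain ⟨n, hn⟩ := (Subgroup.mem_inf.mp hz).1
      exact ⟨n, Subtype.ext (by push_cast; exact hn)⟩
    set P : Subgroup A := pPart A p with hPdef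
    have hPp : IsPGroup p ↥P := by
      rintro ⟨a, ha⟩
      obtain ⟨n, hn⟩ := ha
      exact ⟨n, Subtype.ext (by push_cast; exact hn)⟩
    have hsmul_mem : ∀ (g : A) (z : M), z ∈ N → g • z ∈ N := by
      intro g z hz
      obtain ⟨⟨n, hn⟩, hzf⟩ := Subgroup.mem_inf.mp hz
      refine Subgroup.mem_inf.mpr ⟨⟨n, ?_⟩, fun a => ?_⟩
      · rw [← smul_pow', hn, smul_one]
      · show (a ^ p ^ k) • g • z = g • z
        rw [smul_smul, mul_comm, ← smul_smul, hzf a]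
    letI : MulAction ↥P ↥N :=
      { smul := fun g z => ⟨(g : A) • (z : M), hsmul_mem g z z.2⟩
        one_smul := fun z => Subtype.ext (by show ((1 : ↥P) : A) • (z : M) = z; rw [OneMemClass.coe_one, one_smul])
        mul_smul := fun g h z => Subtype.ext (by
          show ((g * h : ↥P) : A) • (z : M) = (g : A) • ((h : A) • (z : M))
          rw [MulMemClass.coe_mul, mul_smul]) }
    have hsmul_coe : ∀ (g : ↥P) (z : ↥N), ((g • z : ↥N) : M) = (g : A) • (z : M) := fun _ _ => rfl
    have hfixN : ∀ z : ↥N, z ∈ MulAction.fixedPoints ↥P ↥N → z = 1 := by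
      intro z hz
      have hzf : ∀ a : A, (a ^ p ^ k) • (z : M) = (z : M) := (Subgroup.mem_inf.mp z.2).2
      have hzM : ∀ a : A, a • (z : M) = (z : M) := by
        intro a
        have h0 : (orderOf a) ≠ 0 := (orderOf_pos a).ne'
        set i := (orderOf a).factorization p with hidef
        set t := orderOf a / p ^ i with htdef
        have hpi : p ^ i ∣ orderOf a := Nat.ordProj_dvd _ _
        have hti : p ^ i * t = orderOf a := Nat.mul_div_cancel' hpi
        have hpt : ¬ p ∣ t := Nat.not_dvd_ordCompl hp h0
        have h1 : a ^ (p ^ i) ∈ MulAction.stabilizer A (z : M) := by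
          have hord : (a ^ p ^ i) ^ t = 1 := by
            rw [← pow_mul, hti, pow_orderOf_eq_one]
          have hdvd : orderOf (a ^ p ^ i) ∣ t := orderOf_dvd_of_pow_eq_one hord
          have hco : Nat.gcd (p ^ k) (orderOf (a ^ p ^ i)) = 1 := by
            refine Nat.Coprime.pow_left k ((Nat.Prime.coprime_iff_not_dvd hp).mpr ?_)
            intro hpd
            exact hpt (hpd.trans hdvd)
          refine mem_of_pows_mem _ _ hco ?_ ?_
          · exact MulAction.mem_stabilizer_iff.mpr (hzf (a ^ p ^ i))
          · rw [pow_orderOf_eq_one]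
            exact Subgroup.one_mem _
        have h2 : a ^ t ∈ MulAction.stabilizer A (z : M) := by
          have hPmem : a ^ t ∈ P := ⟨i, by rw [← pow_mul, mul_comm t, hti, pow_orderOf_eq_one]⟩
          have h3 := hz ⟨a ^ t, hPmem⟩
          exact MulAction.mem_stabilizer_iff.mpr (congrArg Subtype.val h3)
        have hco2 : Nat.gcd (p ^ i) t = 1 :=
          Nat.Coprime.pow_left i ((Nat.Prime.coprime_iff_not_dvd hp).mpr hpt)
        exact MulAction.mem_stabilizer_iff.mp (mem_of_pows_mem _ _ hco2 h1 h2)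
      exact Subtype.ext (hfix _ hzM)
    have hcard1 : ∀ z : M, z ∈ N → z = 1 := by
      have hmod := hPp.card_modEq_card_fixedPoints ↥N
      have hone : (1 : ↥N) ∈ MulAction.fixedPoints ↥P ↥N := by
        intro g
        exact Subtype.ext (by rw [hsmul_coe]; exact smul_one _)
      have hcf : Nat.card (MulAction.fixedPoints ↥P ↥N) = 1 := by
        rw [Nat.card_eq_one_iff_unique]
        refine ⟨⟨fun x y => ?_⟩, ⟨⟨1, hone⟩⟩⟩
        have hx1 := hfixN x.1 x.2
        have hy1 := hfixN y.1 y.2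
        exact Subtype.ext (hx1.trans hy1.symm)
      obtain ⟨nn, hnn⟩ := IsPGroup.iff_card.mp hNp
      rw [hnn, hcf] at hmod
      rcases Nat.eq_zero_or_pos nn with h0 | h0
      · intro z hzN
        have hN1 : Nat.card ↥N = 1 := by rw [hnn, h0, pow_zero]
        haveI := (Nat.card_eq_one_iff_unique.mp hN1).1
        exact congrArg Subtype.val (Subsingleton.elim (⟨z, hzN⟩ : ↥N) 1)
      · exfalso
        have h1 : p ^ nn % p = 0 :=
          Nat.mod_eq_zero_of_dvd (dvd_pow_self p h0.ne')
        have h2 : 1 % p = 1 := Nat.mod_eq_of_lt hp.one_lt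
        have := hmod
        unfold Nat.ModEq at this
        omega
    -- the p'-part of A acting
    set H : Subgroup A := (powMonoidHom (p ^ k) : A →* A).range with hHdef
    haveI : Fintype ↥H := Fintype.ofFinite _
    have hpH : ¬ p ∣ Nat.card ↥H := by
      intro hdvd
      rw [Nat.card_eq_fintype_card] at hdvd
      obtain ⟨h₀, hh₀⟩ := exists_prime_orderOf_dvd_card p hdvd
      obtain ⟨b, hb⟩ := h₀.2
      have hm0 : orderOf b ≠ 0 := (orderOf_pos b).ne'
      set j := (orderOf b).factorization p with hjdef
      have hjk : j ≤ k := by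
        have hdv : p ^ j ∣ Nat.card A := (Nat.ordProj_dvd _ _).trans (orderOf_dvd_natCard b)
        exact (Nat.Prime.pow_dvd_iff_le_factorization hp (Nat.card_pos).ne').mp hdv
      set t0 := orderOf b / p ^ j with ht0def
      have ht0 : p ^ j * t0 = orderOf b := Nat.mul_div_cancel' (Nat.ordProj_dvd _ _)
      have hpt0 : ¬ p ∣ t0 := Nat.not_dvd_ordCompl hp hm0
      have hbt : (b ^ p ^ k) ^ t0 = 1 := by
        rw [← pow_mul]
        refine orderOf_dvd_iff_pow_eq_one.mp ?_
        rw [← ht0]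
        exact mul_dvd_mul (pow_dvd_pow p hjk) dvd_rfl
      have hdvd2 : orderOf (b ^ p ^ k) ∣ t0 := orderOf_dvd_of_pow_eq_one hbt
      have hcoe : (powMonoidHom (p ^ k) : A →* A) b = b ^ p ^ k := rfl
      rw [hcoe] at hb
      rw [hb] at hdvd2
      have hoc : orderOf ((h₀ : A)) = orderOf h₀ :=
        orderOf_injective H.subtype H.subtype_injective h₀
      rw [hoc, hh₀] at hdvd2
      exact hpt0 hdvd2
    set f : ↥H → M := fun h => (h : A) • x with hfdef
    set π := ∏ h : ↥H, f h with hπdef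
    have hπN : π ∈ N := by
      refine Subgroup.mem_inf.mpr ⟨?_, ?_⟩
      · refine Subgroup.prod_mem _ (fun h _ => ?_)
        obtain ⟨n, hn⟩ := hxp
        exact ⟨n, by rw [hfdef]; rw [← smul_pow', hn, smul_one]⟩
      · intro a
        show (a ^ p ^ k) • π = π
        set β : ↥H := ⟨a ^ p ^ k, ⟨a, rfl⟩⟩ with hβdef
        have h1 : (a ^ p ^ k) • π = ∏ h : ↥H, (a ^ p ^ k) • f h := by
          rw [hπdef]
          exact map_prod (MulDistribMulAction.toMonoidHom M (a ^ p ^ k)) f Finset.univ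
        rw [h1]
        have h2 : ∀ h : ↥H, (a ^ p ^ k) • f h = f ((Equiv.mulLeft β) h) := by
          intro h
          show (a ^ p ^ k) • ((h : A) • x) = ((β * h : ↥H) : A) • x
          rw [smul_smul, MulMemClass.coe_mul]
        rw [Finset.prod_congr rfl (fun h _ => h2 h)]
        exact Equiv.prod_comp (Equiv.mulLeft β) f
    have hπ1 : π = 1 := hcard1 π hπN
    have hsplit : π = (∏ h : ↥H, (f h * x⁻¹)) * x ^ Nat.card ↥H := by
      rw [Finset.prod_mul_distrib, hπdef]
      rw [Finset.prod_const, Finset.card_univ, inv_pow, Nat.card_eq_fintype_card]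
      rw [mul_assoc, ← inv_pow, ← mul_pow, inv_mul_cancel, one_pow, mul_one]
    have hQ : (∏ h : ↥H, (f h * x⁻¹)) ∈ B :=
      Subgroup.prod_mem _ (fun h _ => Subgroup.subset_closure ⟨(h : A), x, rfl⟩)
    have hxcard : x ^ Nat.card ↥H ∈ B := by
      have h3 : (∏ h : ↥H, (f h * x⁻¹)) * x ^ Nat.card ↥H = 1 := by rw [← hsplit, hπ1]
      have h4 : x ^ Nat.card ↥H = (∏ h : ↥H, (f h * x⁻¹))⁻¹ := eq_inv_of_mul_eq_one_left ?_
      · rw [h4]; exact B.inv_mem hQ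
      · rw [← h3]
        exact (mul_comm _ _)
    have hcop : Nat.gcd (Nat.card ↥H) (orderOf x) = 1 := by
      obtain ⟨n, hn⟩ := hxp
      have hdvd : orderOf x ∣ p ^ n := orderOf_dvd_of_pow_eq_one hn
      obtain ⟨e, _, hee⟩ := (Nat.dvd_prime_pow hp).mp hdvd
      rw [hee]
      exact Nat.Coprime.pow_right e (((Nat.Prime.coprime_iff_not_dvd hp).mpr hpH).symm)
    refine mem_of_pows_mem B x hcop hxcard ?_
    rw [pow_orderOf_eq_one]
    exact B.one_mem
  -- general case by strong induction on the order
  have main : ∀ n : ℕ, ∀ x : M, orderOf x = n → x ∈ B := by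
    intro n
    induction n using Nat.strong_induction_on with
    | _ n ih =>
      intro x hxn
      rcases eq_or_ne n 1 with h1 | h1
      · have : x = 1 := orderOf_eq_one_iff.mp (by rw [hxn, h1])
        rw [this]; exact B.one_mem
      · obtain ⟨p, hp, hpn⟩ := Nat.exists_prime_and_dvd h1
        have hn0 : n ≠ 0 := by rw [← hxn]; exact (orderOf_pos x).ne'
        set i := n.factorization p with hidef
        have hi0 : i ≠ 0 := (Nat.Prime.factorization_pos_of_dvd hp hn0 hpn).ne'
        have hpidvd : p ^ i ∣ n := Nat.ordProj_dvd n p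
        set t := n / p ^ i with htdef
        have hti : p ^ i * t = n := Nat.mul_div_cancel' hpidvd
        have hpt : ¬ p ∣ t := Nat.not_dvd_ordCompl hp hn0
        have ht0 : t ≠ 0 := by
          intro h
          rw [h, mul_zero] at hti
          exact hn0 hti.symm
        have hord1 : orderOf (x ^ p ^ i) ∣ t := by
          apply orderOf_dvd_of_pow_eq_one
          rw [← pow_mul, hti, ← hxn, pow_orderOf_eq_one]
        have htlt : t < n := by
          rw [htdef]
          exact Nat.div_lt_self (Nat.pos_of_ne_zero hn0)
            (Nat.one_lt_pow hi0 hp.one_lt)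
        have hlt : orderOf (x ^ p ^ i) < n :=
          lt_of_le_of_lt (Nat.le_of_dvd (Nat.pos_of_ne_zero ht0) hord1) htlt
        have hB1 : x ^ p ^ i ∈ B := ih _ hlt _ rfl
        have hB2 : x ^ t ∈ B := hprim p hp _
          ⟨i, by rw [← pow_mul, mul_comm t, hti, ← hxn, pow_orderOf_eq_one]⟩
        exact mem_of_pows_mem B x
          (Nat.Coprime.pow_left i ((Nat.Prime.coprime_iff_not_dvd hp).mpr hpt)) hB1 hB2
  exact main _ m rfl

theorem stmt_5 (G : Type*) [Group G] [Finite G] (d : ℕ)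
    (hZ : Subgroup.center G = ⊥)
    (hgen : ∃ S : Finset G, S.card ≤ d ∧ Subgroup.closure (S : Set G) = commutator G) :
    Nat.card G ≤ Nat.card (commutator G) ^ (d + 1) := by
  classical
  obtain ⟨S, hScard, hSgen⟩ := hgen
  set K : Subgroup G := commutator G with hKdef
  set C : Subgroup G := Subgroup.centralizer (K : Set G) with hCdef
  have hcomm_mem : ∀ g y : G, g * y * g⁻¹ * y⁻¹ ∈ K := by
    intro g y
    have h := Subgroup.commutator_mem_commutator (Subgroup.mem_top g) (Subgroup.mem_top y)
    rw [← commutator_def] at h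
    rw [commutatorElement_def] at h
    exact h
  -- C is commutative via the Hall-Witt identity
  have hallwitt : ∀ a b g : G,
      (b⁻¹ * ((a⁻¹*b*a*b⁻¹)⁻¹ * g⁻¹ * (a⁻¹*b*a*b⁻¹) * g) * b) *
      (g⁻¹ * ((b⁻¹*g*b*g⁻¹)⁻¹ * a⁻¹ * (b⁻¹*g*b*g⁻¹) * a) * g) *
      (a⁻¹ * ((g⁻¹*a*g*a⁻¹)⁻¹ * b⁻¹ * (g⁻¹*a*g*a⁻¹) * b) * a) = 1 := by
    intro a b g; group
  have hCcomm : ∀ a b : G, a ∈ C → b ∈ C → a * b = b * a := by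
    intro a b ha hb
    have hzg : ∀ g : G, g * (a⁻¹*b*a*b⁻¹) = (a⁻¹*b*a*b⁻¹) * g := by
      intro g
      have huK : b⁻¹*g*b*g⁻¹ ∈ K := by
        have := hcomm_mem b⁻¹ g
        rwa [inv_inv] at this
      have hvK : g⁻¹*a*g*a⁻¹ ∈ K := by
        have := hcomm_mem g⁻¹ a
        rwa [inv_inv] at this
      have hu : (b⁻¹*g*b*g⁻¹) * a = a * (b⁻¹*g*b*g⁻¹) :=
        Subgroup.mem_centralizer_iff.mp ha _ huK
      have hv : (g⁻¹*a*g*a⁻¹) * b = b * (g⁻¹*a*g*a⁻¹) :=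
        Subgroup.mem_centralizer_iff.mp hb _ hvK
      have hw2 : (b⁻¹*g*b*g⁻¹)⁻¹ * a⁻¹ * (b⁻¹*g*b*g⁻¹) * a = 1 := by
        rw [mul_assoc ((b⁻¹*g*b*g⁻¹)⁻¹ * a⁻¹) (b⁻¹*g*b*g⁻¹) a, hu]
        group
      have hw3 : (g⁻¹*a*g*a⁻¹)⁻¹ * b⁻¹ * (g⁻¹*a*g*a⁻¹) * b = 1 := by
        rw [mul_assoc ((g⁻¹*a*g*a⁻¹)⁻¹ * b⁻¹) (g⁻¹*a*g*a⁻¹) b, hv]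
        group
      have hid := hallwitt a b g
      rw [hw2, hw3] at hid
      have h3 : b⁻¹ * ((a⁻¹*b*a*b⁻¹)⁻¹ * g⁻¹ * (a⁻¹*b*a*b⁻¹) * g) * b = 1 := by
        rw [← hid]; group
      have h6 : b * (b⁻¹ * ((a⁻¹*b*a*b⁻¹)⁻¹ * g⁻¹ * (a⁻¹*b*a*b⁻¹) * g) * b) * b⁻¹
          = (a⁻¹*b*a*b⁻¹)⁻¹ * g⁻¹ * (a⁻¹*b*a*b⁻¹) * g := by group
      have h4 : (a⁻¹*b*a*b⁻¹)⁻¹ * g⁻¹ * (a⁻¹*b*a*b⁻¹) * g = 1 := by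
        rw [← h6, h3, mul_one, mul_inv_cancel]
      have h7 : (a⁻¹*b*a*b⁻¹) * ((a⁻¹*b*a*b⁻¹)⁻¹ * g⁻¹ * (a⁻¹*b*a*b⁻¹) * g)
          = g⁻¹ * (a⁻¹*b*a*b⁻¹) * g := by group
      rw [h4, mul_one] at h7
      calc g * (a⁻¹*b*a*b⁻¹) = g * (g⁻¹ * (a⁻¹*b*a*b⁻¹) * g) := by rw [← h7]
        _ = (a⁻¹*b*a*b⁻¹) * g := by group
    have hcen : (a⁻¹*b*a*b⁻¹) ∈ Subgroup.center G := Subgroup.mem_center_iff.mpr hzg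
    rw [hZ] at hcen
    have hz1 : a⁻¹*b*a*b⁻¹ = 1 := Subgroup.mem_bot.mp hcen
    have h8 : a * ((a⁻¹*b*a*b⁻¹) * b) = a * (1 * b) := by rw [hz1]
    calc a * b = a * (1 * b) := by rw [one_mul]
      _ = a * ((a⁻¹*b*a*b⁻¹) * b) := h8.symm
      _ = b * a := by group
  haveI hCic : IsMulCommutative C := ⟨⟨fun x y => Subtype.ext (hCcomm x y x.2 y.2)⟩⟩
  haveI hCnormal : C.Normal := by
    have : (Subgroup.centralizer ((commutator G : Subgroup G) : Set G)).Normal := inferInstance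
    exact this
  haveI : Finite (MulAut ↥C) :=
    Finite.of_injective (fun e : MulAut ↥C => (e : ↥C → ↥C)) DFunLike.coe_injective
  set Φ : G →* MulAut ↥C := MulAut.conjNormal with hΦdef
  set A : Subgroup (MulAut ↥C) := Φ.range with hAdef
  haveI hAic : IsMulCommutative A := by
    constructor; constructor
    rintro ⟨φ, g, rfl⟩ ⟨ψ, h, rfl⟩
    apply Subtype.ext
    show Φ g * Φ h = Φ h * Φ g
    rw [← map_mul, ← map_mul]
    apply DFunLike.ext
    intro c
    apply Subtype.ext
    have hA1 : ((Φ (g*h)) c : G) = (g*h) * c * (g*h)⁻¹ := MulAut.conjNormal_apply _ _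
    have hA2 : ((Φ (h*g)) c : G) = (h*g) * c * (h*g)⁻¹ := MulAut.conjNormal_apply _ _
    rw [hA1, hA2]
    have hw : (h*g)⁻¹ * (g*h) ∈ K := by
      have h9 := hcomm_mem g⁻¹ h⁻¹
      rw [inv_inv, inv_inv] at h9
      have : (h*g)⁻¹ * (g*h) = g⁻¹ * h⁻¹ * g * h := by group
      rw [this]
      exact h9
    have hcw : ((h*g)⁻¹ * (g*h)) * (c : G) = (c : G) * ((h*g)⁻¹ * (g*h)) :=
      Subgroup.mem_centralizer_iff.mp c.2 _ hw
    calc (g*h) * (c:G) * (g*h)⁻¹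
        = (h*g) * (((h*g)⁻¹*(g*h)) * (c:G) * ((h*g)⁻¹*(g*h))⁻¹) * (h*g)⁻¹ := by group
      _ = (h*g) * ((c:G) * ((h*g)⁻¹*(g*h)) * ((h*g)⁻¹*(g*h))⁻¹) * (h*g)⁻¹ := by rw [hcw]
      _ = (h*g) * (c:G) * (h*g)⁻¹ := by group
  have hfix : ∀ c : ↥C, (∀ a : ↥A, a • c = c) → c = 1 := by
    intro c hc
    have hcen : (c : G) ∈ Subgroup.center G := by
      rw [Subgroup.mem_center_iff]
      intro g
      have h10 := hc ⟨Φ g, g, rfl⟩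
      have h11 : ((Φ g) c : G) = (c : G) := congrArg Subtype.val h10
      have h12 : g * (c:G) * g⁻¹ = (c:G) := by
        rw [← MulAut.conjNormal_apply (H := C) g c]
        exact h11
      calc g * (c:G) = (g * (c:G) * g⁻¹) * g := by group
        _ = (c:G) * g := by rw [h12]
    rw [hZ] at hcen
    exact Subtype.ext (Subgroup.mem_bot.mp hcen)
  have hCK : ∀ c : G, c ∈ C → c ∈ K := by
    intro c0 hc0
    have hm := open scoped IsMulCommutative in keyL1 (A := ↥A) (M := ↥C) hfix ⟨c0, hc0⟩
    have hle : Subgroup.closure {x : ↥C | ∃ (a : ↥A) (y : ↥C), (a • y) * y⁻¹ = x}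
        ≤ K.subgroupOf C := by
      rw [Subgroup.closure_le]
      rintro x ⟨a, y, rfl⟩
      obtain ⟨g, hg⟩ := a.2
      rw [SetLike.mem_coe, Subgroup.mem_subgroupOf]
      have h1 : ((a • y : ↥C) : G) = g * (y:G) * g⁻¹ := by
        have h2 : (a • y : ↥C) = (Φ g) y := by
          show ((a : MulAut ↥C)) y = (Φ g) y
          rw [hg]
        rw [h2]
        exact MulAut.conjNormal_apply _ _
      have hcoe : (((a • y) * y⁻¹ : ↥C) : G) = g * (y:G) * g⁻¹ * (y:G)⁻¹ := by
        push_cast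
        rw [h1]
      rw [hcoe]
      exact hcomm_mem g y
    exact Subgroup.mem_subgroupOf.mp (hle hm)
  -- counting
  have hSsubK : ∀ s : G, s ∈ S → s ∈ K := fun s hs => by
    have h := Subgroup.subset_closure (k := (S : Set G)) hs
    rw [hSgen] at h
    exact h
  set ψ : G → ({x // x ∈ S} → ↥K) :=
    fun g => fun s => ⟨g * s * g⁻¹ * (s:G)⁻¹, hcomm_mem g s⟩ with hψdef
  have hψinj : ∀ g h : G, ψ g = ψ h → g⁻¹ * h ∈ C := by
    intro g h hgh
    rw [hCdef, Subgroup.mem_centralizer_iff]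
    intro kk hkk
    have hKle : K ≤ Subgroup.centralizer {g⁻¹ * h} := by
      rw [← hSgen, Subgroup.closure_le]
      intro s hs
      rw [SetLike.mem_coe, Subgroup.mem_centralizer_singleton_iff]
      have h13 := congrArg (fun F => (F ⟨s, hs⟩ : G)) hgh
      simp only [hψdef] at h13
      have h2 : g * s * g⁻¹ = h * s * h⁻¹ := mul_right_cancel h13
      calc s * (g⁻¹ * h) = g⁻¹ * (g * s * g⁻¹) * h := by group
        _ = g⁻¹ * (h * s * h⁻¹) * h := by rw [h2]
        _ = (g⁻¹ * h) * s := by group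
    exact Subgroup.mem_centralizer_singleton_iff.mp (hKle hkk)
  set Ψ : (G ⧸ C) → ({x // x ∈ S} → ↥K) := fun q => ψ q.out with hΨdef
  have hΨinj : Function.Injective Ψ := by
    intro q r h
    rw [← QuotientGroup.out_eq' q, ← QuotientGroup.out_eq' r]
    exact QuotientGroup.eq.mpr (hψinj _ _ h)
  have hq : Nat.card (G ⧸ C) ≤ Nat.card ↥K ^ d := by
    have h1 := Nat.card_le_card_of_injective Ψ hΨinj
    rw [Nat.card_fun] at h1
    have h2 : Nat.card {x // x ∈ S} = S.card := by
      rw [Nat.card_eq_fintype_card, Fintype.card_coe]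
    rw [h2] at h1
    exact h1.trans (Nat.pow_le_pow_right Nat.card_pos hScard)
  have hc : Nat.card ↥C ≤ Nat.card ↥K := Subgroup.card_le_of_le (fun c hc => hCK c hc)
  calc Nat.card G = Nat.card (G ⧸ C) * Nat.card ↥C :=
        Subgroup.card_eq_card_quotient_mul_card_subgroup C
    _ ≤ Nat.card ↥K ^ d * Nat.card ↥K := Nat.mul_le_mul hq hc
    _ = Nat.card ↥K ^ (d+1) := (pow_succ _ _).symm
end

section
/- If P is a finite p-group generated by elements a_1, ..., a_d together with its center Z(P), then every element of the derived subgroup P' can be written as a product [x_1,a_1][x_2,a_2]···[x_d,a_d] for some x_1,...,x_d ∈ P. -/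
open scoped commutatorElement

lemma aux_prod_merge {G : Type*} [Group G] : ∀ {d : ℕ} (f g : Fin d → G),
    (∀ i x, g i * x = x * g i) →
    (List.ofFn fun i => f i * g i).prod = (List.ofFn f).prod * (List.ofFn g).prod := by
  intro d
  induction d with
  | zero => intro f g _; simp
  | succ n ih =>
    intro f g hg
    rw [List.ofFn_succ (f := fun i => f i * g i), List.ofFn_succ (f := f),
        List.ofFn_succ (f := g), List.prod_cons, List.prod_cons, List.prod_cons,
        ih (fun i => f i.succ) (fun i => g i.succ) (fun i x => hg i.succ x)]
    have h := hg 0 (List.ofFn fun i : Fin n => f i.succ).prod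
    rw [mul_assoc (f 0), ← mul_assoc (g 0), h, mul_assoc, ← mul_assoc, ← mul_assoc]

lemma aux_prod_inv {G : Type*} [Group G] {d : ℕ} (c : Fin d → G)
    (hc : ∀ i x, c i * x = x * c i) :
    (List.ofFn fun i => (c i)⁻¹).prod = ((List.ofFn c).prod)⁻¹ := by
  have hci : ∀ i x, (c i)⁻¹ * x = x * (c i)⁻¹ := by
    intro i x
    calc (c i)⁻¹ * x = (c i)⁻¹ * (x * c i) * (c i)⁻¹ := by group
      _ = (c i)⁻¹ * (c i * x) * (c i)⁻¹ := by rw [← hc i x]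
      _ = x * (c i)⁻¹ := by group
  have h := aux_prod_merge c (fun i => (c i)⁻¹) hci
  simp only [mul_inv_cancel] at h
  have h1 : (List.ofFn fun _ : Fin d => (1 : G)).prod = 1 := by
    simp
  rw [h1] at h
  exact eq_inv_of_mul_eq_one_right h.symm

lemma aux_prod_single {G : Type*} [Group G] : ∀ {d : ℕ} (j : Fin d) (c : G),
    (List.ofFn fun i => if i = j then c else 1).prod = c := by
  intro d
  induction d with
  | zero => exact fun j => j.elim0
  | succ n ih =>
    intro j c
    rcases Fin.eq_zero_or_eq_succ j with h | ⟨j', rfl⟩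
    · subst h
      rw [List.ofFn_succ, List.prod_cons, if_pos rfl]
      have : (List.ofFn fun i : Fin n => if i.succ = (0 : Fin (n+1)) then c else 1).prod = 1 := by
        simp [Fin.succ_ne_zero]
      rw [this, mul_one]
    · rw [List.ofFn_succ, List.prod_cons, if_neg (Ne.symm (Fin.succ_ne_zero j'))]
      have : (fun i : Fin n => if i.succ = j'.succ then c else 1)
          = fun i : Fin n => if i = j' then c else 1 := by
        funext i; simp [Fin.succ_inj]
      rw [this, ih j' c, one_mul]

lemma aux_comm_mul {G : Type*} [Group G] (u v w : G)
    (hc : ∀ x, ⁅v, w⁆ * x = x * ⁅v, w⁆) :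
    ⁅u * v, w⁆ = ⁅u, w⁆ * ⁅v, w⁆ := by
  calc ⁅u * v, w⁆ = u * (⁅v, w⁆ * u⁻¹) * ⁅u, w⁆ := by
        simp only [commutatorElement_def]; group
    _ = u * (u⁻¹ * ⁅v, w⁆) * ⁅u, w⁆ := by rw [hc u⁻¹]
    _ = ⁅v, w⁆ * ⁅u, w⁆ := by group
    _ = ⁅u, w⁆ * ⁅v, w⁆ := hc _

lemma aux_comm_inv {G : Type*} [Group G] (v w : G)
    (hc : ∀ x, ⁅v, w⁆ * x = x * ⁅v, w⁆) :
    ⁅v⁻¹, w⁆ = ⁅v, w⁆⁻¹ := by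
  have h := aux_comm_mul v⁻¹ v w hc
  rw [inv_mul_cancel, commutatorElement_one_left] at h
  rw [eq_comm, inv_eq_iff_mul_eq_one, hc ⁅v⁻¹, w⁆]
  exact h.symm

lemma aux_comm_mul_right {G : Type*} [Group G] (y g h : G)
    (hc : ∀ x, ⁅y, h⁆ * x = x * ⁅y, h⁆) :
    ⁅y, g * h⁆ = ⁅y, g⁆ * ⁅y, h⁆ := by
  calc ⁅y, g * h⁆ = ⁅y, g⁆ * (g * ⁅y, h⁆ * g⁻¹) := by
        simp only [commutatorElement_def]; group
    _ = ⁅y, g⁆ * (⁅y, h⁆ * g * g⁻¹) := by rw [← hc g]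
    _ = ⁅y, g⁆ * ⁅y, h⁆ := by group

lemma aux_comm_inv_right {G : Type*} [Group G] (y g : G)
    (hc : ∀ x, ⁅y, g⁻¹⁆ * x = x * ⁅y, g⁻¹⁆) :
    ⁅y, g⁻¹⁆ = ⁅y, g⁆⁻¹ := by
  have h := aux_comm_mul_right y g g⁻¹ hc
  rw [mul_inv_cancel, commutatorElement_one_right] at h
  exact eq_inv_of_mul_eq_one_right h.symm

lemma aux_map_W {G H : Type*} [Group G] [Group H] (f : G →* H) {d : ℕ} (x b : Fin d → G) :
    f (List.ofFn fun i => ⁅x i, b i⁆).prod = (List.ofFn fun i => ⁅f (x i), f (b i)⁆).prod := by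
  rw [map_list_prod, List.map_ofFn]
  have : (⇑f ∘ fun i => ⁅x i, b i⁆) = fun i => ⁅f (x i), f (b i)⁆ :=
    funext fun i => map_commutatorElement f (x i) (b i)
  rw [this]

theorem stmt_7 (p : ℕ) [Fact p.Prime] (P : Type*) [Group P] [Finite P]
    (hp : IsPGroup p P) (d : ℕ) (a : Fin d → P)
    (hgen : Subgroup.closure (Set.range a ∪ (Subgroup.center P : Set P)) = ⊤) :
    ∀ g ∈ commutator P, ∃ x : Fin d → P,
      g = (List.ofFn fun i => ⁅x i, a i⁆).prod := by
  have key : ∀ n : ℕ, ∀ g ∈ commutator P, ∃ x : Fin d → P, ∃ z ∈ Subgroup.lowerCentralSeries (⊤ : Subgroup P) (n + 1),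
      g = (List.ofFn fun i => ⁅x i, a i⁆).prod * z := by
    intro n
    induction n with
    | zero =>
      intro g hg
      refine ⟨fun _ => 1, g, hg, ?_⟩
      simp
    | succ n ih =>
      intro g hg
      obtain ⟨x, z, hz, rfl⟩ := ih g hg
      set N := Subgroup.lowerCentralSeries (⊤ : Subgroup P) (n + 1 + 1) with hN
      haveI : N.Normal := by rw [hN]; exact Subgroup.normal_of_characteristic _
      let π : P →* P ⧸ N := QuotientGroup.mk' N
      have hcent : ∀ y ∈ Subgroup.lowerCentralSeries (⊤ : Subgroup P) (n + 1), ∀ q : P ⧸ N, π y * q = q * π y := by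
        intro y hy q
        induction q using QuotientGroup.induction_on with
        | H g' =>
          show π y * π g' = π g' * π y
          rw [← map_mul, ← map_mul]
          have he : (y * g')⁻¹ * (g' * y) = ⁅y⁻¹, g'⁻¹⁆⁻¹ := by
            simp only [commutatorElement_def]; group
          have hmem : (y * g')⁻¹ * (g' * y) ∈ N := by
            rw [he]
            refine inv_mem ?_
            rw [hN, mem_lowerCentralSeries_succ_iff]
            exact Subgroup.subset_closure ⟨y⁻¹, inv_mem hy, g'⁻¹, Subgroup.mem_top _, rfl⟩
          exact QuotientGroup.eq.mpr hmem
      have hcentc : ∀ v w : P, v ∈ Subgroup.lowerCentralSeries (⊤ : Subgroup P) n →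
          ∀ q : P ⧸ N, ⁅π v, π w⁆ * q = q * ⁅π v, π w⁆ := by
        intro v w hv q
        rw [← map_commutatorElement]
        refine hcent _ ?_ q
        rw [mem_lowerCentralSeries_succ_iff]
        exact Subgroup.subset_closure ⟨v, hv, w, Subgroup.mem_top _, rfl⟩
      let T : Subgroup (P ⧸ N) :=
        { carrier := {q | ∃ y : Fin d → P, (∀ i, y i ∈ Subgroup.lowerCentralSeries (⊤ : Subgroup P) n) ∧
            q = (List.ofFn fun i => ⁅π (y i), π (a i)⁆).prod}
          one_mem' := ⟨fun _ => 1, fun _ => one_mem _, by simp⟩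
          mul_mem' := by
            rintro q q' ⟨y, hy, rfl⟩ ⟨y', hy', rfl⟩
            refine ⟨fun i => y i * y' i, fun i => mul_mem (hy i) (hy' i), ?_⟩
            show _ = (List.ofFn fun i => ⁅π (y i * y' i), π (a i)⁆).prod
            have hfun : (fun i => ⁅π (y i * y' i), π (a i)⁆)
                = fun i => ⁅π (y i), π (a i)⁆ * ⁅π (y' i), π (a i)⁆ := by
              funext i
              rw [map_mul]
              exact aux_comm_mul _ _ _ (hcentc (y' i) (a i) (hy' i))
            rw [hfun, aux_prod_merge _ _ (fun i => hcentc (y' i) (a i) (hy' i))]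
          inv_mem' := by
            rintro q ⟨y, hy, rfl⟩
            refine ⟨fun i => (y i)⁻¹, fun i => inv_mem (hy i), ?_⟩
            show _ = (List.ofFn fun i => ⁅π ((y i)⁻¹), π (a i)⁆).prod
            have hfun : (fun i => ⁅π ((y i)⁻¹), π (a i)⁆)
                = fun i => ⁅π (y i), π (a i)⁆⁻¹ := by
              funext i
              rw [map_inv]
              exact aux_comm_inv _ _ (hcentc (y i) (a i) (hy i))
            rw [hfun, aux_prod_inv _ (fun i => hcentc (y i) (a i) (hy i))] }
      have hT : Subgroup.lowerCentralSeries (⊤ : Subgroup P) (n + 1) ≤ Subgroup.comap π T := by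
        rw [lowerCentralSeries_succ, Subgroup.commutator_def, Subgroup.closure_le]
        rintro w ⟨y, hy, g', -, rfl⟩
        have hyc : ∀ h : P, ∀ q : P ⧸ N, ⁅π y, π h⁆ * q = q * ⁅π y, π h⁆ :=
          fun h q => hcentc y h hy q
        show π ⁅y, g'⁆ ∈ T
        let U : Subgroup P :=
          { carrier := {h | π ⁅y, h⁆ ∈ T}
            one_mem' := by
              show π ⁅y, (1 : P)⁆ ∈ T
              rw [commutatorElement_one_right, map_one]
              exact T.one_mem
            mul_mem' := by
              intro g₁ h₁ hg₁ hh₁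
              show π ⁅y, g₁ * h₁⁆ ∈ T
              have e : π ⁅y, g₁ * h₁⁆ = π ⁅y, g₁⁆ * π ⁅y, h₁⁆ := by
                rw [map_commutatorElement, map_commutatorElement, map_commutatorElement, map_mul]
                exact aux_comm_mul_right _ _ _ (hyc h₁)
              rw [e]
              exact mul_mem hg₁ hh₁
            inv_mem' := by
              intro g₁ hg₁
              show π ⁅y, g₁⁻¹⁆ ∈ T
              have e : π ⁅y, g₁⁻¹⁆ = (π ⁅y, g₁⁆)⁻¹ := by
                rw [map_commutatorElement, map_commutatorElement, map_inv]
                refine aux_comm_inv_right _ _ ?_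
                intro q
                have := hyc g₁⁻¹ q
                rwa [map_inv] at this
              rw [e]
              exact inv_mem hg₁ }
        have hle : Subgroup.closure (Set.range a ∪ (Subgroup.center P : Set P)) ≤ U := by
          rw [Subgroup.closure_le]
          rintro w' (⟨j, rfl⟩ | hw')
          · show π ⁅y, a j⁆ ∈ T
            refine ⟨fun i => if i = j then y else 1, fun i => ?_, ?_⟩
            · by_cases h' : i = j
              · simpa [h'] using hy
              · simp only [h', if_false]
                exact one_mem _
            · show π ⁅y, a j⁆ = (List.ofFn fun i => ⁅π (if i = j then y else 1), π (a i)⁆).prod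
              have hfun : (fun i => ⁅π (if i = j then y else 1), π (a i)⁆)
                  = fun i => if i = j then ⁅π y, π (a j)⁆ else 1 := by
                funext i
                by_cases h' : i = j
                · subst h'; simp
                · simp [h']
              rw [hfun, aux_prod_single, map_commutatorElement]
          · show π ⁅y, w'⁆ ∈ T
            have hcomm : ⁅y, w'⁆ = 1 :=
              commutatorElement_eq_one_iff_commute.mpr (Subgroup.mem_center_iff.mp hw' y)
            rw [hcomm, map_one]
            exact T.one_mem
        have hg'mem : g' ∈ Subgroup.closure (Set.range a ∪ (Subgroup.center P : Set P)) := by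
          rw [hgen]; trivial
        exact hle hg'mem
      obtain ⟨y, hy, heq⟩ := Subgroup.mem_comap.mp (hT hz)
      have hπ : π ((List.ofFn fun i => ⁅x i, a i⁆).prod * z)
          = π ((List.ofFn fun i => ⁅x i * y i, a i⁆).prod) := by
        rw [map_mul, aux_map_W π x a, heq, aux_map_W π (fun i => x i * y i) a,
          ← aux_prod_merge (fun i => ⁅π (x i), π (a i)⁆) (fun i => ⁅π (y i), π (a i)⁆)
            (fun i => hcentc (y i) (a i) (hy i))]
        have hfun : (fun i => ⁅π (x i * y i), π (a i)⁆)
            = fun i => ⁅π (x i), π (a i)⁆ * ⁅π (y i), π (a i)⁆ := by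
          funext i
          rw [map_mul]
          exact aux_comm_mul _ _ _ (hcentc (y i) (a i) (hy i))
        rw [hfun]
      have hmem : ((List.ofFn fun i => ⁅x i * y i, a i⁆).prod)⁻¹
          * ((List.ofFn fun i => ⁅x i, a i⁆).prod * z) ∈ N :=
        QuotientGroup.eq.mp hπ.symm
      exact ⟨fun i => x i * y i, _, hmem, by group⟩
  intro g hg
  obtain ⟨m, hm⟩ := nilpotent_iff_lowerCentralSeries.mp hp.isNilpotent
  obtain ⟨x, z, hz, hgx⟩ := key m g hg
  have hz' : z ∈ (⊥ : Subgroup P) := by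
    rw [← hm]
    exact lowerCentralSeries_antitone _ (Nat.le_succ m) hz
  rw [Subgroup.mem_bot] at hz'
  subst hz'
  exact ⟨x, by rwa [mul_one] at hgx⟩
end

section
/- Let G be a finite group, H ≤ G a subgroup generated by d elements, and K a normal subgroup of G. Then |K : C_K(H)| ≤ |G' ∩ K|^d. -/
open scoped commutatorElement

theorem stmt_10 (G : Type*) [Group G] [Finite G] (H K : Subgroup G) [K.Normal] (d : ℕ)
    (hgen : ∃ S : Finset G, S.card ≤ d ∧ Subgroup.closure (S : Set G) = H) :
    ((Subgroup.centralizer (H : Set G)).subgroupOf K).index ≤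
      Nat.card ↥(commutator G ⊓ K) ^ d := by
  obtain ⟨S, hScard, hSclosure⟩ := hgen
  set N := (Subgroup.centralizer (H : Set G)).subgroupOf K with hN
  set X := ↥(commutator G ⊓ K) with hX
  -- the commutator map
  have key : ∀ (k : K), ∀ s ∈ S, ⁅s, (k : G)⁆ ∈ commutator G ⊓ K := by
    intro k s hs
    refine ⟨Subgroup.commutator_mem_commutator (Subgroup.mem_top s) (Subgroup.mem_top _), ?_⟩
    show s * (k : G) * s⁻¹ * (k : G)⁻¹ ∈ K
    exact mul_mem (Subgroup.Normal.conj_mem ‹K.Normal› _ k.2 s) (inv_mem k.2)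
  let f : K → (S → X) := fun k s => ⟨⁅(s : G), (k : G)⁆, key k s s.2⟩
  -- f descends to an injective map on the quotient
  have hrel : ∀ k k' : K, f k = f k' → (k : G)⁻¹ * (k' : G) ∈ Subgroup.centralizer (H : Set G) := by
    intro k k' hff
    have hcomm : ∀ s ∈ S, Commute ((k : G)⁻¹ * (k' : G)) s := by
      intro s hs
      have h1 : ⁅s, (k : G)⁆ = ⁅s, (k' : G)⁆ := by
        have := congrFun hff ⟨s, hs⟩
        exact Subtype.ext_iff.mp this
      have h2 : s * (k : G) * s⁻¹ * (k : G)⁻¹ = s * (k' : G) * s⁻¹ * (k' : G)⁻¹ := h1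
      have h3 : (k : G) * s⁻¹ * (k : G)⁻¹ = (k' : G) * s⁻¹ * (k' : G)⁻¹ := by
        have := congrArg (fun x => s⁻¹ * x) h2
        simpa [mul_assoc] using this
      have h4 : ((k : G)⁻¹ * (k' : G)) * s⁻¹ = s⁻¹ * ((k : G)⁻¹ * (k' : G)) := by
        have := congrArg (fun x => (k : G)⁻¹ * x * (k' : G)) h3
        simpa [mul_assoc] using this.symm
      have : Commute ((k : G)⁻¹ * (k' : G)) s⁻¹ := h4
      simpa using this.inv_right
    rw [Subgroup.mem_centralizer_iff]
    intro h hh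
    rw [← hSclosure] at hh
    induction hh using Subgroup.closure_induction with
    | mem x hx => exact ((hcomm x hx).symm : Commute _ _)
    | one => simp
    | mul x y _ _ hx hy => exact (Commute.mul_left hx hy : Commute _ _)
    | inv x _ hx => exact (Commute.inv_left hx : Commute _ _)
  -- lift to the quotient
  let g : K ⧸ N → (S → X) := Quotient.lift f (by
    intro a b hab
    have hab0 : a⁻¹ * b ∈ N := QuotientGroup.leftRel_apply.mp hab
    have hab' : (a : G)⁻¹ * (b : G) ∈ Subgroup.centralizer (H : Set G) := by
      have := (Subgroup.mem_subgroupOf).mp hab0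
      simpa using this
    funext s
    apply Subtype.ext
    show ⁅(s : G), (a : G)⁆ = ⁅(s : G), (b : G)⁆
    have hs : (s : G) ∈ H := by
      rw [← hSclosure]; exact Subgroup.subset_closure s.2
    have hc : (s : G) * ((a : G)⁻¹ * (b : G)) = ((a : G)⁻¹ * (b : G)) * (s : G) :=
      Subgroup.mem_centralizer_iff.mp hab' _ hs
    -- derive b = a * c with c commuting with s
    have hb : (b : G) = (a : G) * ((a : G)⁻¹ * (b : G)) := by group
    rw [commutatorElement_def, commutatorElement_def]
    rw [hb]
    set c := (a : G)⁻¹ * (b : G)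
    set sg := (s : G)
    set ag := (a : G)
    have hcs : c * sg⁻¹ = sg⁻¹ * c := by
      calc c * sg⁻¹ = sg⁻¹ * (sg * c) * sg⁻¹ := by group
        _ = sg⁻¹ * (c * sg) * sg⁻¹ := by rw [hc]
        _ = sg⁻¹ * c := by group
    calc sg * ag * sg⁻¹ * ag⁻¹
        = sg * ag * (sg⁻¹ * c) * (c⁻¹ * ag⁻¹) := by group
      _ = sg * ag * (c * sg⁻¹) * (c⁻¹ * ag⁻¹) := by rw [hcs]
      _ = sg * (ag * c) * sg⁻¹ * (ag * c)⁻¹ := by group)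
  have hginj : Function.Injective g := by
    intro a b hab
    induction a using Quotient.inductionOn with
    | h a =>
    induction b using Quotient.inductionOn with
    | h b =>
    have : f a = f b := hab
    refine Quotient.sound (QuotientGroup.leftRel_apply.mpr ?_)
    show a⁻¹ * b ∈ N
    rw [Subgroup.mem_subgroupOf]
    simpa using hrel a b this
  have h1 : N.index = Nat.card (K ⧸ N) := rfl
  have h2 : Nat.card (K ⧸ N) ≤ Nat.card (S → X) := Nat.card_le_card_of_injective g hginj
  have h3 : Nat.card (S → X) = Nat.card X ^ S.card := by
    rw [Nat.card_fun]
    simp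
  have hX1 : 1 ≤ Nat.card X := Nat.one_le_iff_ne_zero.mpr (Nat.card_ne_zero.mpr ⟨⟨1, one_mem _⟩, inferInstance⟩)
  calc N.index = Nat.card (K ⧸ N) := h1
    _ ≤ Nat.card (S → X) := h2
    _ = Nat.card X ^ S.card := h3
    _ ≤ Nat.card X ^ d := Nat.pow_le_pow_right hX1 hScard
end

section
/- Let A be a finite abelian p-group of rank r, and let S be a collection of subgroups of A with trivial intersection. Then there exists a subcollection R ⊆ S with |R| ≤ r whose intersection is trivial. -/
open Pointwise


/-- The rank of a group: the minimal number `r` such that every subgroup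
can be generated by `r` elements. -/
noncomputable def grpRank (G : Type*) [Group G] : ℕ :=
  sInf {r : ℕ | ∀ H : Subgroup G, ∃ S : Finset G, S.card ≤ r ∧ Subgroup.closure (S : Set G) = H}

section Aux

variable {p : ℕ} [Fact p.Prime] {A : Type*} [CommGroup A] [Finite A]

private lemma aux_card_closure_le (T : Finset A) (hT : ∀ x ∈ T, x ^ p = 1) :
    Nat.card (Subgroup.closure (T : Set A)) ≤ p ^ T.card := by
  classical
  induction T using Finset.induction with
  | empty => simp [Subgroup.closure_empty]
  | @insert x s hx ih =>
    have hxord : x ^ p = 1 := hT x (Finset.mem_insert_self x s)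
    have hs : ∀ y ∈ s, y ^ p = 1 := fun y hy => hT y (Finset.mem_insert_of_mem hy)
    have hcl : Subgroup.closure ((insert x s : Finset A) : Set A) =
        Subgroup.zpowers x ⊔ Subgroup.closure (s : Set A) := by
      rw [Finset.coe_insert, Set.insert_eq, Subgroup.closure_union,
        ← Subgroup.zpowers_eq_closure]
    have hmul : (↑(Subgroup.zpowers x ⊔ Subgroup.closure (s : Set A)) : Set A) =
        (Subgroup.zpowers x : Set A) * (Subgroup.closure (s : Set A) : Set A) :=
      Subgroup.normal_mul _ _
    have hcard : Nat.card (Subgroup.zpowers x ⊔ Subgroup.closure (s : Set A) : Subgroup A) ≤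
        Nat.card (Subgroup.zpowers x) * Nat.card (Subgroup.closure (s : Set A)) := by
      have := Set.natCard_mul_le (s := (Subgroup.zpowers x : Set A))
        (t := (Subgroup.closure (s : Set A) : Set A))
      rw [← hmul] at this
      simpa using this
    have hzp : Nat.card (Subgroup.zpowers x) ≤ p := by
      rw [Nat.card_zpowers]
      exact Nat.le_of_dvd (Fact.out : p.Prime).pos (orderOf_dvd_of_pow_eq_one hxord)
    rw [hcl, Finset.card_insert_of_notMem hx, pow_succ, mul_comm (p ^ s.card) p]
    exact le_trans hcard (Nat.mul_le_mul hzp (ih hs))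

private lemma aux_exists_order_p (hp : IsPGroup p A) {K : Subgroup A} (hK : K ≠ ⊥) :
    ∃ y, y ∈ K ∧ y ≠ 1 ∧ y ^ p = 1 := by
  obtain ⟨⟨x, hxK⟩, hx1⟩ := Subgroup.ne_bot_iff_exists_ne_one.mp hK
  have hxne : x ≠ 1 := by simpa [Subgroup.mk_eq_one] using hx1
  obtain ⟨k, hk⟩ := hp x
  obtain ⟨m, hm, hord⟩ := (Nat.dvd_prime_pow (Fact.out : p.Prime)).mp
    (orderOf_dvd_of_pow_eq_one hk)
  have hm0 : m ≠ 0 := by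
    rintro rfl
    exact hxne (orderOf_eq_one_iff.mp (by simpa using hord))
  refine ⟨x ^ p ^ (m - 1), K.pow_mem hxK _, ?_, ?_⟩
  · intro h
    have hdvd : orderOf x ∣ p ^ (m - 1) := orderOf_dvd_of_pow_eq_one h
    rw [hord] at hdvd
    have hle := Nat.le_of_dvd (Nat.pow_pos (Fact.out : p.Prime).pos) hdvd
    exact absurd hle (not_le.mpr (Nat.pow_lt_pow_right (Fact.out : p.Prime).one_lt
      (Nat.sub_lt (Nat.pos_of_ne_zero hm0) one_pos)))
  · rw [← pow_mul, ← pow_succ, Nat.sub_add_cancel (Nat.one_le_iff_ne_zero.mpr hm0),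
      ← hord]
    exact pow_orderOf_eq_one x

private lemma aux_card_lt (hp : IsPGroup p A) {H K : Subgroup A} (hle : H ≤ K) (hne : H ≠ K) :
    p * Nat.card H ≤ Nat.card K := by
  obtain ⟨b, hb⟩ := IsPGroup.iff_card.mp (hp.to_subgroup K)
  have hdvd : Nat.card H ∣ Nat.card K := Subgroup.card_dvd_of_le hle
  rw [hb] at hdvd
  obtain ⟨a, hab, ha⟩ := (Nat.dvd_prime_pow (Fact.out : p.Prime)).mp hdvd
  have hlt : a < b := by
    rcases lt_or_eq_of_le hab with h | rfl
    · exact h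
    · exact absurd (Subgroup.eq_of_le_of_card_ge hle (by rw [hb, ha])) hne
  calc p * Nat.card H = p ^ (a + 1) := by rw [ha, pow_succ, mul_comm]
    _ ≤ p ^ b := Nat.pow_le_pow_right (Fact.out : p.Prime).pos hlt
    _ = Nat.card K := hb.symm

private lemma aux_key (hp : IsPGroup p A) (Ω : Subgroup A) (hΩ : ∀ x, x ∈ Ω ↔ x ^ p = 1)
    (S : Set (Subgroup A)) (hS : sInf S = ⊥) :
    ∀ n (K : Subgroup A), Nat.card (K ⊓ Ω : Subgroup A) ≤ p ^ n →
      ∃ R : Finset (Subgroup A), ↑R ⊆ S ∧ R.card ≤ n ∧ K ⊓ R.inf id = ⊥ := by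
  classical
  intro n
  induction n with
  | zero =>
    intro K hcard
    refine ⟨∅, by simp, by simp, ?_⟩
    simp only [Finset.inf_empty, inf_top_eq]
    by_contra hK
    obtain ⟨y, hyK, hy1, hyp⟩ := aux_exists_order_p hp hK
    have hymem : y ∈ K ⊓ Ω := ⟨hyK, (hΩ y).mpr hyp⟩
    have : (K ⊓ Ω : Subgroup A) ≠ ⊥ := fun h => hy1 (by simpa [h] using hymem)
    have h1 : 1 ≤ Nat.card (K ⊓ Ω : Subgroup A) := Nat.one_le_iff_ne_zero.mpr Nat.card_pos.ne'
    have : Nat.card (K ⊓ Ω : Subgroup A) = 1 := le_antisymm (by simpa using hcard) h1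
    exact ‹(K ⊓ Ω : Subgroup A) ≠ ⊥› (Subgroup.card_eq_one.mp this)
  | succ n ih =>
    intro K hcard
    by_cases hK : K = ⊥
    · exact ⟨∅, by simp, by simp, by simp [hK]⟩
    obtain ⟨y, hyK, hy1, hyp⟩ := aux_exists_order_p hp hK
    have hyK' : y ∈ K ⊓ Ω := ⟨hyK, (hΩ y).mpr hyp⟩
    have hKΩ : (K ⊓ Ω : Subgroup A) ≠ ⊥ := fun h => hy1 (by simpa [h] using hyK')
    have hnle : ¬ K ⊓ Ω ≤ sInf S := fun h => hKΩ (le_bot_iff.mp (hS ▸ h))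
    obtain ⟨H, hHS, hHnle⟩ : ∃ H ∈ S, ¬ K ⊓ Ω ≤ H := by
      by_contra h
      push_neg at h
      exact hnle (le_sInf h)
    have hle : (K ⊓ H) ⊓ Ω ≤ K ⊓ Ω := inf_le_inf_right Ω inf_le_left
    have hne : (K ⊓ H) ⊓ Ω ≠ K ⊓ Ω := by
      intro h
      apply hHnle
      rw [← h]
      exact le_trans inf_le_left inf_le_right
    have hcard' : Nat.card ((K ⊓ H) ⊓ Ω : Subgroup A) ≤ p ^ n := by
      have := aux_card_lt hp hle hne
      have hp1 : 0 < p := (Fact.out : p.Prime).pos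
      have : p * Nat.card ((K ⊓ H) ⊓ Ω : Subgroup A) ≤ p * p ^ n := by
        calc p * Nat.card ((K ⊓ H) ⊓ Ω : Subgroup A) ≤ Nat.card (K ⊓ Ω : Subgroup A) :=
              aux_card_lt hp hle hne
          _ ≤ p ^ (n + 1) := hcard
          _ = p * p ^ n := by ring
      exact Nat.le_of_mul_le_mul_left this hp1
    obtain ⟨R', hR'S, hR'card, hR'inf⟩ := ih (K ⊓ H) hcard'
    refine ⟨insert H R', ?_, ?_, ?_⟩
    · rw [Finset.coe_insert]
      exact Set.insert_subset hHS hR'S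
    · exact le_trans (Finset.card_insert_le H R') (Nat.succ_le_succ hR'card)
    · rw [Finset.inf_insert, id, ← inf_assoc]
      exact hR'inf

end Aux

theorem stmt_13 (p : ℕ) [Fact p.Prime] (A : Type*) [CommGroup A] [Finite A]
    (hp : IsPGroup p A) (r : ℕ) (hr : grpRank A = r)
    (S : Set (Subgroup A)) (hS : sInf S = ⊥) :
    ∃ R : Finset (Subgroup A), ↑R ⊆ S ∧ R.card ≤ r ∧ R.inf id = ⊥ := by
  classical
  haveI := Fintype.ofFinite A
  -- the defining set of grpRank is nonempty
  have hne : {r : ℕ | ∀ H : Subgroup A, ∃ T : Finset A,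
      T.card ≤ r ∧ Subgroup.closure (T : Set A) = H}.Nonempty := by
    refine ⟨Fintype.card A, fun H => ⟨(H : Set A).toFinset, ?_, ?_⟩⟩
    · exact Finset.card_le_univ _
    · rw [Set.coe_toFinset]
      exact Subgroup.closure_eq H
  have hmem : ∀ H : Subgroup A, ∃ T : Finset A,
      T.card ≤ r ∧ Subgroup.closure (T : Set A) = H := by
    have := Nat.sInf_mem hne
    rwa [show sInf _ = r from hr] at this
  -- the socle
  set Ω : Subgroup A := (powMonoidHom p : A →* A).ker with hΩdef
  have hΩ : ∀ x, x ∈ Ω ↔ x ^ p = 1 := fun x => by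
    simp [hΩdef, MonoidHom.mem_ker, powMonoidHom_apply]
  obtain ⟨T, hTcard, hTcl⟩ := hmem Ω
  have hTord : ∀ x ∈ T, x ^ p = 1 := fun x hx =>
    (hΩ x).mp (hTcl ▸ Subgroup.subset_closure hx)
  have hΩcard : Nat.card Ω ≤ p ^ r :=
    le_trans (hTcl ▸ aux_card_closure_le T hTord)
      (Nat.pow_le_pow_right (Fact.out : p.Prime).pos hTcard)
  obtain ⟨R, hRS, hRcard, hRinf⟩ := aux_key hp Ω hΩ S hS r ⊤ (by simpa using hΩcard)
  exact ⟨R, hRS, hRcard, by simpa using hRinf⟩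
end

section
/- Let G be a finite group, D = {g ∈ G : [g, G'] ⊆ Z(G)}, and let P be a Sylow p-subgroup of D. Then the quotient G'/C_{G'}(P) is a p-group. -/
open scoped commutatorElement

/-- Auxiliary: if `c` is central and `g * k * g⁻¹ = c * k`, then `g^m * k * g⁻ᵐ = c^m * k`. -/
private lemma aux_pow_conj {G : Type*} [Group G] (g k c : G)
    (hc : c ∈ Subgroup.center G) (h : g * k * g⁻¹ = c * k) :
    ∀ m : ℕ, g ^ m * k * (g ^ m)⁻¹ = c ^ m * k := by
  intro m
  induction m with
  | zero => simp
  | succ m ih =>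
    have hgc : g * c ^ m = c ^ m * g :=
      Subgroup.mem_center_iff.mp (Subgroup.pow_mem _ hc m) g
    calc g ^ (m + 1) * k * (g ^ (m + 1))⁻¹
        = g * (g ^ m * k * (g ^ m)⁻¹) * g⁻¹ := by rw [pow_succ']; group
      _ = g * (c ^ m * k) * g⁻¹ := by rw [ih]
      _ = (g * c ^ m) * k * g⁻¹ := by group
      _ = (c ^ m * g) * k * g⁻¹ := by rw [hgc]
      _ = c ^ m * (g * k * g⁻¹) := by group
      _ = c ^ m * (c * k) := by rw [h]
      _ = c ^ (m + 1) * k := by rw [← mul_assoc, ← pow_succ]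

theorem stmt_15 (p : ℕ) [Fact p.Prime] (G : Type*) [Group G] [Finite G]
    (D : Subgroup G)
    (hD : ∀ g : G, g ∈ D ↔ ∀ h ∈ commutator G, ⁅g, h⁆ ∈ Subgroup.center G)
    (P : Sylow p D) :
    ∃ n : ℕ,
      ((Subgroup.centralizer (((P : Subgroup D).map D.subtype : Subgroup G) : Set G)).subgroupOf
          (commutator G)).index = p ^ n := by
  classical
  set Q : Subgroup G := (P : Subgroup D).map D.subtype with hQ
  set K : Subgroup G := commutator G with hK
  -- every element of Q lies in D
  have hQD : ∀ g : G, g ∈ Q → g ∈ D := fun g hg => Subgroup.map_subtype_le _ hg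
  -- centrality of commutators
  have hcent : ∀ g ∈ D, ∀ k ∈ K, ⁅g, k⁆ ∈ Subgroup.center G := fun g hg => (hD g).mp hg
  -- uniform p-power exponent for Q
  obtain ⟨N, hN⟩ := IsPGroup.iff_card.mp P.2
  have hQpow : ∀ g : G, g ∈ Q → g ^ (p ^ N) = 1 := by
    rintro g ⟨d, hd, rfl⟩
    have h1 : (⟨d, hd⟩ : (P : Subgroup D)) ^ (p ^ N) = 1 := by
      rw [← hN]; exact pow_card_eq_one'
    have hd' : d ^ (p ^ N) = 1 := by
      have := congrArg (fun x => ((x : (P : Subgroup D)) : D)) h1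
      simpa using this
    show (D.subtype d) ^ (p ^ N) = 1
    rw [← map_pow, hd']
    simp
  -- the homomorphism F : K →* (Q → G), k ↦ fun g => ⁅(g : G), (k : G)⁆
  have hmul : ∀ (k₁ k₂ : K) (g : Q),
      ⁅(g : G), ((k₁ * k₂ : K) : G)⁆ = ⁅(g : G), (k₁ : G)⁆ * ⁅(g : G), (k₂ : G)⁆ := by
    intro k₁ k₂ g
    have hc : ⁅(g : G), (k₂ : G)⁆ ∈ Subgroup.center G :=
      hcent _ (hQD _ g.2) _ k₂.2
    have hcomm : (k₁ : G) * ⁅(g : G), (k₂ : G)⁆ = ⁅(g : G), (k₂ : G)⁆ * (k₁ : G) :=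
      Subgroup.mem_center_iff.mp hc (k₁ : G)
    have key : ⁅(g : G), ((k₁ : G) * (k₂ : G))⁆
        = ⁅(g : G), (k₁ : G)⁆ * ((k₁ : G) * ⁅(g : G), (k₂ : G)⁆ * (k₁ : G)⁻¹) := by
      simp only [commutatorElement_def]; group
    have hconj : (k₁ : G) * ⁅(g : G), (k₂ : G)⁆ * (k₁ : G)⁻¹ = ⁅(g : G), (k₂ : G)⁆ := by
      rw [hcomm]; group
    show ⁅(g : G), (k₁ : G) * (k₂ : G)⁆ = _
    rw [key, hconj]
  let F : K →* (Q → G) := MonoidHom.mk'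
    (fun k => fun g => ⁅(g : G), (k : G)⁆)
    (fun k₁ k₂ => funext fun g => hmul k₁ k₂ g)
  -- the kernel of F is exactly the centralizer of Q, viewed inside K
  have hker : (Subgroup.centralizer (Q : Set G)).subgroupOf K = F.ker := by
    ext k
    simp only [Subgroup.mem_subgroupOf, MonoidHom.mem_ker]
    constructor
    · intro h
      funext g
      show ⁅(g : G), (k : G)⁆ = 1
      rw [commutatorElement_eq_one_iff_mul_comm]
      exact Subgroup.mem_centralizer_iff.mp h (g : G) g.2
    · intro h
      rw [Subgroup.mem_centralizer_iff]
      intro x hx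
      have h1 := congrFun h (⟨x, hx⟩ : Q)
      simp only [Pi.one_apply] at h1
      exact commutatorElement_eq_one_iff_mul_comm.mp h1
  -- the range of F is a p-group
  have hrange : IsPGroup p F.range := by
    rintro ⟨x, k, rfl⟩
    refine ⟨N, ?_⟩
    have hFk : (F k) ^ (p ^ N) = 1 := by
      funext g
      simp only [Pi.pow_apply, Pi.one_apply]
      show ⁅(g : G), (k : G)⁆ ^ (p ^ N) = 1
      have hc : ⁅(g : G), (k : G)⁆ ∈ Subgroup.center G := hcent _ (hQD _ g.2) _ k.2
      have hconj : (g : G) * (k : G) * (g : G)⁻¹ = ⁅(g : G), (k : G)⁆ * (k : G) := by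
        simp only [commutatorElement_def]; group
      have h2 := aux_pow_conj (g : G) (k : G) ⁅(g : G), (k : G)⁆ hc hconj (p ^ N)
      rw [hQpow _ g.2] at h2
      simp only [one_mul, inv_one, mul_one] at h2
      calc ⁅(g : G), (k : G)⁆ ^ (p ^ N)
          = ⁅(g : G), (k : G)⁆ ^ (p ^ N) * (k : G) * (k : G)⁻¹ := by group
        _ = (k : G) * (k : G)⁻¹ := by rw [← h2]
        _ = 1 := by group
    exact Subtype.ext (by simpa using hFk)
  obtain ⟨n, hn⟩ := IsPGroup.iff_card.mp hrange
  exact ⟨n, by rw [hker, Subgroup.index_ker, hn]⟩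
end

section
/- Let G be a finite group, D = {g ∈ G : [g, G'] ⊆ Z(G)}, Z = G' ∩ Z(G), and suppose rk(G'/Z) = r. Then |D : C_G(G')| ≤ |G' : Z|^(2r). -/
open scoped commutatorElement
open scoped IsMulCommutative

open Subgroup

section Helpers

variable {G : Type*} [Group G]

private lemma conj_central {z : G} (hz : z ∈ Subgroup.center G) (x : G) :
    z * x * z⁻¹ = x := by
  rw [← Subgroup.mem_center_iff.mp hz x]; group

private lemma comm_central_right {z : G} (hz : z ∈ Subgroup.center G) (x : G) :
    ⁅x, z⁆ = 1 :=
  commutatorElement_eq_one_iff_mul_comm.mpr (Subgroup.mem_center_iff.mp hz x)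

private lemma comm_central_left {z : G} (hz : z ∈ Subgroup.center G) (x : G) :
    ⁅z, x⁆ = 1 :=
  commutatorElement_eq_one_iff_mul_comm.mpr (Subgroup.mem_center_iff.mp hz x).symm

private lemma conj_central' {z : G} (hz : z ∈ Subgroup.center G) (x : G) :
    x * z * x⁻¹ = z := by
  rw [Subgroup.mem_center_iff.mp hz x]; group

private lemma comm_central_cancel {z w : G} (hz : z ∈ Subgroup.center G)
    (hw : w ∈ Subgroup.center G) (a b : G) : ⁅z * a, w * b⁆ = ⁅a, b⁆ := by
  have e1 : ⁅z * a, w * b⁆ = (z * ⁅a, w * b⁆ * z⁻¹) * ⁅z, w * b⁆ := by group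
  rw [e1, comm_central_left hz, mul_one, conj_central hz]
  have e2 : ⁅a, w * b⁆ = ⁅a, w⁆ * (w * ⁅a, b⁆ * w⁻¹) := by group
  rw [e2, comm_central_right hw, one_mul, conj_central hw]

end Helpers

section Homs

variable {G : Type*} [Group G] (D : Subgroup G)
  (hD : ∀ g ∈ D, ∀ h ∈ commutator G, ⁅g, h⁆ ∈ Subgroup.center G)

/-- the map `u ↦ (h ↦ ⁅u, h⁆)` from `D` into `Hom(G', Z(G))`. -/
private def piHom : D →* (↥(commutator G) →* ↥(Subgroup.center G)) where
  toFun u :=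
  { toFun := fun h => ⟨⁅(u : G), (h : G)⁆, hD u u.2 h h.2⟩
    map_one' := by
      ext
      simp
    map_mul' := fun h k => by
      ext
      show ⁅(u : G), ((h : G) * (k : G))⁆ = ⁅(u : G), (h : G)⁆ * ⁅(u : G), (k : G)⁆
      have e : ⁅(u : G), (h : G) * (k : G)⁆
          = ⁅(u : G), (h : G)⁆ * ((h : G) * ⁅(u : G), (k : G)⁆ * (h : G)⁻¹) := by group
      rw [e, conj_central' (hD u u.2 k k.2) _] }
  map_one' := by
    ext h
    show ⁅(1 : G), (h : G)⁆ = 1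
    group
  map_mul' := fun u v => by
    ext h
    show ⁅((u : G) * (v : G)), (h : G)⁆ = ⁅(u : G), (h : G)⁆ * ⁅(v : G), (h : G)⁆
    have e : ⁅((u : G) * (v : G)), (h : G)⁆
        = ((u : G) * ⁅(v : G), (h : G)⁆ * (u : G)⁻¹) * ⁅(u : G), (h : G)⁆ := by group
    rw [e, conj_central' (hD v v.2 h h.2) _]
    exact Subgroup.mem_center_iff.mp (hD u u.2 h h.2) _

private lemma piHom_ker :
    (piHom D hD).ker = (Subgroup.centralizer (commutator G : Set G)).subgroupOf D := by
  ext u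
  simp only [MonoidHom.mem_ker, Subgroup.mem_subgroupOf, Subgroup.mem_centralizer_iff]
  constructor
  · intro h1 h hh
    have : (piHom D hD u) ⟨h, hh⟩ = 1 := by rw [h1]; rfl
    have : ⁅(u : G), h⁆ = 1 := congrArg Subtype.val this
    have := commutatorElement_eq_one_iff_mul_comm.mp this
    rw [this]
  · intro hc
    ext h
    show ⁅(u : G), (h : G)⁆ = 1
    exact commutatorElement_eq_one_iff_mul_comm.mpr (hc h h.2).symm

end Homs

section Theta

variable {G : Type*} [Group G] (D : Subgroup G)
  (hD : ∀ g ∈ D, ∀ h ∈ commutator G, ⁅g, h⁆ ∈ Subgroup.center G)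

private lemma comm_mem_commutator (a b : G) : ⁅a, b⁆ ∈ commutator G :=
  Subgroup.commutator_mem_commutator (Subgroup.mem_top a) (Subgroup.mem_top b)

/-- `u ↦ ⁅a, u⁆` mod `Z`, a homomorphism on `D`. -/
private def thetaHom (a : G) :
    D →* (↥(commutator G) ⧸ (Subgroup.center G).subgroupOf (commutator G)) where
  toFun u := QuotientGroup.mk ⟨⁅a, (u : G)⁆, comm_mem_commutator a u⟩
  map_one' := by
    show QuotientGroup.mk _ = 1
    rw [QuotientGroup.eq_one_iff, Subgroup.mem_subgroupOf]
    show ⁅a, ((1 : D) : G)⁆ ∈ Subgroup.center G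
    rw [OneMemClass.coe_one]
    have : ⁅a, (1 : G)⁆ = 1 := by group
    rw [this]; exact one_mem _
  map_mul' := fun u v => by
    rw [← QuotientGroup.mk_mul, QuotientGroup.eq, Subgroup.mem_subgroupOf]
    have e : (((⟨⁅a, ((u * v : D) : G)⁆, comm_mem_commutator a _⟩ : ↥(commutator G)))⁻¹ *
        ((⟨⁅a, (u : G)⁆, comm_mem_commutator a _⟩ : ↥(commutator G)) *
          (⟨⁅a, (v : G)⁆, comm_mem_commutator a _⟩ : ↥(commutator G))) : ↥(commutator G)).val
        = ⁅(u : G), ⁅a, (v : G)⁆⁻¹⁆ := by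
      show (⁅a, (u : G) * (v : G)⁆)⁻¹ * (⁅a, (u : G)⁆ * ⁅a, (v : G)⁆)
        = ⁅(u : G), ⁅a, (v : G)⁆⁻¹⁆
      group
    rw [e]
    exact hD u u.2 _ (inv_mem (comm_mem_commutator a (v : G)))

/-- `u ↦ ⁅u, y⁆` for `y ∈ G'`, homomorphism `D →* Z(G)`. -/
private def phiHom (y : G) (hy : y ∈ commutator G) : D →* ↥(Subgroup.center G) where
  toFun u := ⟨⁅(u : G), y⁆, hD u u.2 y hy⟩
  map_one' := by ext; show ⁅(1 : G), y⁆ = 1; group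
  map_mul' := fun u v => by
    ext
    show ⁅(u : G) * (v : G), y⁆ = ⁅(u : G), y⁆ * ⁅(v : G), y⁆
    have e : ⁅(u : G) * (v : G), y⁆
        = ((u : G) * ⁅(v : G), y⁆ * (u : G)⁻¹) * ⁅(u : G), y⁆ := by group
    rw [e, conj_central' (hD v v.2 y hy) _]
    exact Subgroup.mem_center_iff.mp (hD u u.2 y hy) _

/-- Lemma A: if `⁅a,u⁆` and `⁅b,u⁆` are central then `u` centralizes `⁅a,b⁆`. -/
private lemma ker_theta_le (a b : G) :
    ((thetaHom D hD a).prod (thetaHom D hD b)).ker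
      ≤ (phiHom D hD ⁅a, b⁆ (comm_mem_commutator a b)).ker := by
  intro u hu
  rw [MonoidHom.mem_ker, MonoidHom.prod_apply, Prod.mk_eq_one] at hu
  obtain ⟨h1, h2⟩ := hu
  have hza : ⁅a, (u : G)⁆ ∈ Subgroup.center G := by
    have := (QuotientGroup.eq_one_iff _).mp h1
    rwa [Subgroup.mem_subgroupOf] at this
  have hzb : ⁅b, (u : G)⁆ ∈ Subgroup.center G := by
    have := (QuotientGroup.eq_one_iff _).mp h2
    rwa [Subgroup.mem_subgroupOf] at this
  have hza' : ⁅(u : G), a⁆ ∈ Subgroup.center G := by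
    rw [← commutatorElement_inv]; exact inv_mem hza
  have hzb' : ⁅(u : G), b⁆ ∈ Subgroup.center G := by
    rw [← commutatorElement_inv]; exact inv_mem hzb
  rw [MonoidHom.mem_ker]
  ext
  show ⁅(u : G), ⁅a, b⁆⁆ = 1
  rw [commutatorElement_eq_one_iff_mul_comm]
  have key : (u : G) * ⁅a, b⁆ * (u : G)⁻¹ = ⁅a, b⁆ := by
    have e1 : (u : G) * ⁅a, b⁆ * (u : G)⁻¹
        = ⁅(u : G) * a * (u : G)⁻¹, (u : G) * b * (u : G)⁻¹⁆ := by group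
    have e2 : (u : G) * a * (u : G)⁻¹ = ⁅(u : G), a⁆ * a := by group
    have e3 : (u : G) * b * (u : G)⁻¹ = ⁅(u : G), b⁆ * b := by group
    rw [e1, e2, e3, comm_central_cancel hza' hzb']
  calc (u : G) * ⁅a, b⁆ = ((u : G) * ⁅a, b⁆ * (u : G)⁻¹) * (u : G) := by group
  _ = ⁅a, b⁆ * (u : G) := by rw [key]

/-- The counting consequence: `|range φ_c|` divides `n²`. -/
private lemma card_phi_range_dvd [Finite G] (a b : G) :
    Nat.card (phiHom D hD ⁅a, b⁆ (comm_mem_commutator a b)).range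
      ∣ ((Subgroup.center G).subgroupOf (commutator G)).index ^ 2 := by
  have h1 := Subgroup.index_dvd_of_le (ker_theta_le D hD a b)
  rw [Subgroup.index_ker, Subgroup.index_ker] at h1
  refine h1.trans ?_
  have h2 := Subgroup.card_subgroup_dvd_card ((thetaHom D hD a).prod (thetaHom D hD b)).range
  refine h2.trans ?_
  rw [Nat.card_prod, sq, Subgroup.index_eq_card]

end Theta

section Ext

variable {U : Type*} [CommGroup U] [Finite U]

/-- card of a sup is at most the product of cards. -/
private lemma card_sup_le (H K : Subgroup U) :
    Nat.card (H ⊔ K : Subgroup U) ≤ Nat.card H * Nat.card K := by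
  have hsurj : Function.Surjective
      (fun hk : ↥H × ↥K => (⟨(hk.1 : U) * (hk.2 : U),
        mul_mem ((le_sup_left : H ≤ H ⊔ K) hk.1.2)
          ((le_sup_right : K ≤ H ⊔ K) hk.2.2)⟩ : ↥(H ⊔ K))) := by
    rintro ⟨x, hx⟩
    obtain ⟨h, hh, k, hk, rfl⟩ := Subgroup.mem_sup.mp hx
    exact ⟨(⟨h, hh⟩, ⟨k, hk⟩), rfl⟩
  have := Nat.card_le_card_of_surjective _ hsurj
  rwa [Nat.card_prod] at this

private lemma card_closure_le_pow {p : ℕ} (hp : p ≠ 0)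
    (hexp : ∀ u : U, u ^ p = 1) (T : Finset U) :
    Nat.card (Subgroup.closure (T : Set U)) ≤ p ^ T.card := by
  classical
  induction T using Finset.induction_on with
  | empty => simpa [Subgroup.closure_empty] using le_refl 1
  | @insert a T ha ih =>
    rw [Finset.coe_insert, Set.insert_eq, Subgroup.closure_union,
      Finset.card_insert_of_notMem ha, pow_succ]
    refine (card_sup_le _ _).trans ?_
    rw [mul_comm (p ^ T.card) p]
    refine Nat.mul_le_mul ?_ ih
    rw [← Subgroup.zpowers_eq_closure, Nat.card_zpowers]
    exact Nat.le_of_dvd (Nat.pos_of_ne_zero hp) (orderOf_dvd_of_pow_eq_one (hexp a))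

/-- In a finite `p`-group, `H ⊔ {p-th powers} = ⊤` implies `H = ⊤`. -/
private lemma frattini_arg {p : ℕ} {m : ℕ} (hcard : Nat.card U = p ^ m)
    (H : Subgroup U) (hsup : H ⊔ (powMonoidHom p : U →* U).range = ⊤) : H = ⊤ := by
  -- first: ∀ i, ∀ x, x ∈ H ⊔ range (powMonoidHom (p^i))
  have key : ∀ i : ℕ, ∀ x : U, x ∈ H ⊔ (powMonoidHom (p ^ i) : U →* U).range := by
    intro i
    induction i with
    | zero =>
      intro x
      have : x ∈ (powMonoidHom (p ^ 0) : U →* U).range := ⟨x, by simp [powMonoidHom]⟩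
      exact (le_sup_right : _ ≤ H ⊔ _) this
    | succ i ih =>
      intro x
      obtain ⟨h, hh, w, ⟨v, hv⟩, hx⟩ := Subgroup.mem_sup.mp (ih x)
      -- v ^ (p^i) = w ; and v ∈ ⊤ = H ⊔ p-th powers
      have hv2 : v ∈ H ⊔ (powMonoidHom p : U →* U).range := hsup ▸ Subgroup.mem_top v
      obtain ⟨h₂, hh₂, w₂, ⟨v₂, hv₂⟩, hv3⟩ := Subgroup.mem_sup.mp hv2
      refine Subgroup.mem_sup.mpr ⟨h * h₂ ^ (p ^ i), mul_mem hh (pow_mem hh₂ _),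
        v₂ ^ (p ^ (i + 1)), ⟨v₂, rfl⟩, ?_⟩
      have hw : w = h₂ ^ (p ^ i) * v₂ ^ (p ^ (i + 1)) := by
        rw [← hv]
        simp only [powMonoidHom_apply] at hv₂ ⊢
        rw [← hv3, ← hv₂, mul_pow, ← pow_mul, mul_comm p (p ^ i), ← pow_succ]
      rw [← hx, hw, mul_assoc]

  have := key m
  have hr : (powMonoidHom (p ^ m) : U →* U).range = ⊥ := by
    rw [eq_bot_iff]
    rintro x ⟨y, rfl⟩
    simp only [powMonoidHom_apply]
    rw [← hcard]
    exact Subgroup.mem_bot.mpr (pow_card_eq_one' (G := U))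
  rw [eq_top_iff]
  intro x _
  have := key m x
  rwa [hr, sup_bot_eq] at this

end Ext

section Ext2

variable {U : Type*} [CommGroup U] [Finite U]

/-- Extraction: from any generating set of a finite abelian `p`-group that is
`r`-generated, one can pick at most `r` elements generating. -/
private lemma exists_gen_subset {p : ℕ} (hp : p.Prime) (hU : IsPGroup p U)
    {S : Set U} (hS : Subgroup.closure S = ⊤)
    {r : ℕ} (T₀ : Finset U) (hT₀card : T₀.card ≤ r)
    (hT₀gen : Subgroup.closure (T₀ : Set U) = ⊤) :
    ∃ T : Finset U, ↑T ⊆ S ∧ T.card ≤ r ∧ Subgroup.closure (T : Set U) = ⊤ := by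
  classical
  haveI : Fact p.Prime := ⟨hp⟩
  obtain ⟨m, hm⟩ := IsPGroup.iff_card.mp hU
  set Up : Subgroup U := (powMonoidHom p : U →* U).range with hUp
  -- the quotient U ⧸ Up has exponent p and is generated by ≤ r elements, so card ≤ p^r
  have hquot : Nat.card (U ⧸ Up) ≤ p ^ r := by
    have hexp : ∀ u : U ⧸ Up, u ^ p = 1 := by
      intro u
      refine QuotientGroup.induction_on u ?_
      intro z
      rw [← QuotientGroup.mk_pow, QuotientGroup.eq_one_iff]
      exact ⟨z, rfl⟩
    have hgen : Subgroup.closure ((T₀.image (⇑(QuotientGroup.mk' Up))) :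
        Set (U ⧸ Up)) = ⊤ := by
      rw [Finset.coe_image, ← MonoidHom.map_closure (QuotientGroup.mk' Up), hT₀gen]
      exact Subgroup.map_top_of_surjective _ (QuotientGroup.mk'_surjective Up)
    calc Nat.card (U ⧸ Up)
        = Nat.card (⊤ : Subgroup (U ⧸ Up)) := (Subgroup.card_top).symm
      _ = Nat.card (Subgroup.closure ((T₀.image (⇑(QuotientGroup.mk' Up))) :
            Set (U ⧸ Up))) := by rw [hgen]
      _ ≤ p ^ (T₀.image (⇑(QuotientGroup.mk' Up))).card :=
            card_closure_le_pow hp.ne_zero hexp _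
      _ ≤ p ^ r := Nat.pow_le_pow_right hp.pos ((Finset.card_image_le).trans hT₀card)
  have hUcard : Nat.card U ≤ p ^ r * Nat.card Up := by
    rw [Subgroup.card_eq_card_quotient_mul_card_subgroup Up]
    exact Nat.mul_le_mul_right _ hquot
  -- subgroup cards are powers of p
  have hppow : ∀ W : Subgroup U, ∃ a, Nat.card W = p ^ a := by
    intro W
    have : Nat.card W ∣ p ^ m := by rw [← hm]; exact Subgroup.card_subgroup_dvd_card W
    exact (Nat.dvd_prime_pow hp).mp this |>.imp fun a ⟨_, h⟩ => h
  -- main climb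
  have climb : ∀ i : ℕ, ∃ T : Finset U, ↑T ⊆ S ∧ T.card ≤ i ∧
      (Subgroup.closure (T : Set U) ⊔ Up = ⊤ ∨
        p ^ i * Nat.card Up ≤ Nat.card (Subgroup.closure (T : Set U) ⊔ Up : Subgroup U)) := by
    intro i
    induction i with
    | zero =>
      refine ⟨∅, by simp, le_refl 0, Or.inr ?_⟩
      simp only [Finset.coe_empty, Subgroup.closure_empty, bot_sup_eq, pow_zero, one_mul]
      exact le_refl _
    | succ i ih =>
      obtain ⟨T, hTS, hTcard, hT⟩ := ih
      rcases hT with htop | hbound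
      · exact ⟨T, hTS, hTcard.trans (Nat.le_succ i), Or.inl htop⟩
      by_cases htop2 : Subgroup.closure (T : Set U) ⊔ Up = ⊤
      · exact ⟨T, hTS, hTcard.trans (Nat.le_succ i), Or.inl htop2⟩
      -- pick s ∈ S outside W
      have hex : ∃ s ∈ S, s ∉ Subgroup.closure (T : Set U) ⊔ Up := by
        by_contra hcon
        push_neg at hcon
        have : Subgroup.closure S ≤ Subgroup.closure (T : Set U) ⊔ Up := by
          rw [Subgroup.closure_le]
          intro s hs
          exact hcon s hs
        rw [hS, top_le_iff] at this
        exact htop2 this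
      obtain ⟨s, hsS, hsW⟩ := hex
      refine ⟨insert s T, ?_, ?_, Or.inr ?_⟩
      · rw [Finset.coe_insert]
        exact Set.insert_subset hsS hTS
      · exact (Finset.card_insert_le _ _).trans (Nat.succ_le_succ hTcard)
      · -- strict growth
        set W := Subgroup.closure (T : Set U) ⊔ Up with hW
        set W' := Subgroup.closure ((insert s T : Finset U) : Set U) ⊔ Up with hW'
        have hle : W ≤ W' := by
          apply sup_le_sup_right
          apply Subgroup.closure_mono
          rw [Finset.coe_insert]
          exact Set.subset_insert s _
        have hsW' : s ∈ W' := by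
          apply (le_sup_left : _ ≤ W')
          apply Subgroup.subset_closure
          rw [Finset.coe_insert]
          exact Set.mem_insert s _
        have hne : W ≠ W' := fun h => hsW (h ▸ hsW')
        obtain ⟨a, ha⟩ := hppow W
        obtain ⟨b, hb⟩ := hppow W'
        have hdvd : Nat.card W ∣ Nat.card W' := by
          have h1 := Subgroup.card_le_of_le hle
          -- divisibility via subgroupOf
          have := Subgroup.card_subgroup_dvd_card (W.subgroupOf W')
          have hcardsub : Nat.card (W.subgroupOf W') = Nat.card W := by
            apply Nat.card_congr
            exact (Subgroup.subgroupOfEquivOfLe hle).toEquiv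
          rwa [hcardsub] at this
        have hlt : Nat.card W < Nat.card W' :=
          lt_of_le_of_ne (Subgroup.card_le_of_le hle)
            (fun h => hne (Subgroup.eq_of_le_of_card_ge hle h.ge))
        have hab : a < b := by
          rw [ha, hb] at hlt
          exact (Nat.pow_lt_pow_iff_right hp.one_lt).mp hlt
        have hstep : p * Nat.card W ≤ Nat.card W' := by
          rw [ha, hb, ← pow_succ']
          exact Nat.pow_le_pow_right hp.pos hab
        calc p ^ (i + 1) * Nat.card Up = p * (p ^ i * Nat.card Up) := by ring
          _ ≤ p * Nat.card W := Nat.mul_le_mul_left p hbound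
          _ ≤ Nat.card W' := hstep
  obtain ⟨T, hTS, hTcard, hT⟩ := climb r
  have htop : Subgroup.closure (T : Set U) ⊔ Up = ⊤ := by
    rcases hT with h | h
    · exact h
    · -- card forces top
      apply Subgroup.eq_top_of_card_eq
      have h1 : Nat.card (Subgroup.closure (T : Set U) ⊔ Up : Subgroup U) ≤ Nat.card U :=
        Subgroup.card_le_of_le le_top |>.trans_eq Subgroup.card_top
      exact le_antisymm h1 (hUcard.trans h)
  exact ⟨T, hTS, hTcard, frattini_arg hm _ htop⟩

end Ext2

section CardDvd

private lemma card_dvd_of_le {G : Type*} [Group G] [Finite G] {H K : Subgroup G}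
    (h : H ≤ K) : Nat.card H ∣ Nat.card K := by
  have h1 := Subgroup.card_subgroup_dvd_card (H.subgroupOf K)
  have h2 : Nat.card (H.subgroupOf K) = Nat.card H :=
    Nat.card_congr (Subgroup.subgroupOfEquivOfLe h).toEquiv
  rwa [h2] at h1

end CardDvd

theorem stmt_17 (G : Type*) [Group G] [Finite G]
    (D : Subgroup G)
    (hD : ∀ g : G, g ∈ D ↔ ∀ h ∈ commutator G, ⁅g, h⁆ ∈ Subgroup.center G)
    (r : ℕ)
    (hr : grpRank (commutator G ⧸ (Subgroup.center G).subgroupOf (commutator G)) = r) :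
    ((Subgroup.centralizer (commutator G : Set G)).subgroupOf D).index ≤
      ((Subgroup.center G).subgroupOf (commutator G)).index ^ (2 * r) := by
  classical
  have hD' : ∀ g ∈ D, ∀ h ∈ commutator G, ⁅g, h⁆ ∈ Subgroup.center G :=
    fun g hg => (hD g).mp hg
  haveI : Finite (↥(commutator G) →* ↥(Subgroup.center G)) :=
    Finite.of_injective (fun f => (f : ↥(commutator G) → ↥(Subgroup.center G)))
      (fun f g h => MonoidHom.ext (congrFun h))
  set n := ((Subgroup.center G).subgroupOf (commutator G)).index with hn
  have hn0 : n ≠ 0 := Subgroup.index_ne_zero_of_finite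
  rw [← piHom_ker D hD', Subgroup.index_ker]
  have hX0 : Nat.card ↥(piHom D hD').range ≠ 0 := Nat.card_pos.ne'
  suffices hdvd : Nat.card ↥(piHom D hD').range ∣ n ^ (2 * r) by
    exact Nat.le_of_dvd (Nat.pos_of_ne_zero (pow_ne_zero _ hn0)) hdvd
  rw [← Nat.factorization_le_iff_dvd hX0 (pow_ne_zero _ hn0), Finsupp.le_def]
  intro p
  by_cases hp : p.Prime
  swap
  · simp [Nat.factorization_eq_zero_of_not_prime _ hp]
  haveI : Fact p.Prime := ⟨hp⟩
  obtain ⟨P⟩ : Nonempty (Sylow p ↥(piHom D hD').range) := inferInstance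
  set A := (↥(commutator G) →* ↥(Subgroup.center G)) with hA
  set XP : Subgroup A := (P : Subgroup ↥(piHom D hD').range).map (piHom D hD').range.subtype
    with hXPdef
  have hXPcard : Nat.card XP = p ^ (Nat.card ↥(piHom D hD').range).factorization p := by
    rw [← P.card_eq_multiplicity]
    exact (Nat.card_congr (Subgroup.equivMapOfInjective _ _
      (Subgroup.subtype_injective _)).toEquiv).symm
  rw [Nat.factorization_pow, Finsupp.smul_apply, smul_eq_mul]
  suffices hcard : Nat.card XP ≤ p ^ (2 * r * n.factorization p) by
    rw [hXPcard] at hcard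
    exact (Nat.pow_le_pow_iff_right hp.one_lt).mp hcard
  have hXPle : XP ≤ (piHom D hD').range := Subgroup.map_subtype_le _
  have hXPp : IsPGroup p XP := (P.2).map _
  -- the common kernel
  set K : Subgroup ↥(commutator G) := ⨅ (χ : A) (_ : χ ∈ XP), χ.ker with hK
  have hKmem : ∀ {z : ↥(commutator G)}, z ∈ K ↔ ∀ χ ∈ XP, χ z = 1 := by
    intro z
    simp only [hK, Subgroup.mem_iInf, MonoidHom.mem_ker]
  haveI hKn : K.Normal := by
    constructor
    intro x hx g
    rw [hKmem] at hx ⊢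
    intro χ hχ
    rw [map_mul, map_mul, hx χ hχ, map_inv, mul_one, mul_inv_eq_one]
  -- the quotient U
  letI instCG : CommGroup (↥(commutator G) ⧸ K) :=
    { (inferInstance : Group (↥(commutator G) ⧸ K)) with
      mul_comm := by
        intro x y
        refine QuotientGroup.induction_on x ?_
        intro a
        refine QuotientGroup.induction_on y ?_
        intro b
        show QuotientGroup.mk a * QuotientGroup.mk b = QuotientGroup.mk b * QuotientGroup.mk a
        rw [← QuotientGroup.mk_mul, ← QuotientGroup.mk_mul, QuotientGroup.eq]
        have e : (a * b)⁻¹ * (b * a) = ⁅b⁻¹, a⁻¹⁆ := by group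
        rw [e, hKmem]
        intro χ hχ
        rw [map_commutatorElement]
        exact commutatorElement_eq_one_iff_mul_comm.mpr (mul_comm _ _) }
  obtain ⟨mX, hmX⟩ := IsPGroup.iff_card.mp hXPp
  have hUexp : ∀ u : ↥(commutator G) ⧸ K, u ^ (p ^ mX) = 1 := by
    intro u
    refine QuotientGroup.induction_on u ?_
    intro x
    rw [← QuotientGroup.mk_pow, QuotientGroup.eq_one_iff, hKmem]
    intro χ hχ
    have h1 : (⟨χ, hχ⟩ : XP) ^ (p ^ mX) = 1 := by
      rw [← hmX]; exact pow_card_eq_one'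
    have h2 : χ ^ (p ^ mX) = 1 := by
      have := congrArg (Subtype.val) h1
      rwa [SubmonoidClass.coe_pow] at this
    rw [map_pow, ← MonoidHom.pow_apply, h2, MonoidHom.one_apply]
  have hUisP : IsPGroup p (↥(commutator G) ⧸ K) := fun u => ⟨mX, hUexp u⟩
  -- Zs ≤ K
  have hZsK : (Subgroup.center G).subgroupOf (commutator G) ≤ K := by
    intro z hz
    rw [hKmem]
    intro χ hχ
    obtain ⟨u, hu⟩ := hXPle hχ
    rw [← hu]
    ext
    show ⁅(u : G), (z : G)⁆ = 1
    rw [Subgroup.mem_subgroupOf] at hz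
    exact comm_central_right hz _
  -- r-generation of the Z-quotient
  have hprop : ∀ H : Subgroup (↥(commutator G) ⧸ (Subgroup.center G).subgroupOf (commutator G)),
      ∃ SF : Finset (↥(commutator G) ⧸ (Subgroup.center G).subgroupOf (commutator G)),
        SF.card ≤ r ∧ Subgroup.closure (SF : Set _) = H := by
    have hne : {k : ℕ | ∀ H : Subgroup (↥(commutator G) ⧸
        (Subgroup.center G).subgroupOf (commutator G)),
        ∃ SF : Finset (↥(commutator G) ⧸ (Subgroup.center G).subgroupOf (commutator G)),
          SF.card ≤ k ∧ Subgroup.closure (SF : Set (↥(commutator G) ⧸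
            (Subgroup.center G).subgroupOf (commutator G))) = H}.Nonempty := by
      haveI := Fintype.ofFinite (↥(commutator G) ⧸ (Subgroup.center G).subgroupOf (commutator G))
      refine ⟨Fintype.card (↥(commutator G) ⧸ (Subgroup.center G).subgroupOf (commutator G)),
        fun H => ?_⟩
      refine ⟨(H : Set _).toFinset, ?_, ?_⟩
      · exact (Set.toFinset_card _).trans_le (Fintype.card_subtype_le _) |>.trans (le_refl _)
      · rw [Set.coe_toFinset]
        exact Subgroup.closure_eq H
    have hmem := Nat.sInf_mem hne
    unfold grpRank at hr
    rw [hr] at hmem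
    exact hmem
  obtain ⟨SF, hSFcard, hSFgen⟩ := hprop ⊤
  -- surjection onto U
  have hZsK' : (Subgroup.center G).subgroupOf (commutator G) ≤
      K.comap (MonoidHom.id ↥(commutator G)) := by rwa [Subgroup.comap_id]
  set gq := QuotientGroup.map ((Subgroup.center G).subgroupOf (commutator G)) K
    (MonoidHom.id ↥(commutator G)) hZsK' with hgq
  have hgqsurj : Function.Surjective gq := by
    intro x
    refine QuotientGroup.induction_on x ?_
    intro a
    exact ⟨QuotientGroup.mk a, rfl⟩
  -- generating set of U of size ≤ r
  have hT₀gen : Subgroup.closure ((SF.image gq : Finset (↥(commutator G) ⧸ K)) :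
      Set (↥(commutator G) ⧸ K)) = ⊤ := by
    rw [Finset.coe_image, ← MonoidHom.map_closure, hSFgen]
    exact Subgroup.map_top_of_surjective _ hgqsurj
  -- commutator images generate U
  set Scomm : Set (↥(commutator G) ⧸ K) :=
    {u | ∃ x y : G, ∃ hxy : ⁅x, y⁆ ∈ commutator G, QuotientGroup.mk ⟨⁅x, y⁆, hxy⟩ = u}
    with hScommdef
  have hScomm : Subgroup.closure Scomm = ⊤ := by
    rw [eq_top_iff]
    intro u _
    refine QuotientGroup.induction_on u ?_
    rintro ⟨x, hx⟩
    have hx' : x ∈ Subgroup.closure (commutatorSet G) := by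
      rw [← commutator_eq_closure]; exact hx
    revert hx
    refine Subgroup.closure_induction
      (p := fun y _ => ∀ hy' : y ∈ commutator G,
        QuotientGroup.mk (⟨y, hy'⟩ : ↥(commutator G)) ∈ Subgroup.closure Scomm) ?_ ?_ ?_ ?_ hx'
    · rintro w ⟨g₁, g₂, rfl⟩ hy'
      exact Subgroup.subset_closure ⟨g₁, g₂, hy', rfl⟩
    · intro hy'
      have : (⟨(1 : G), hy'⟩ : ↥(commutator G)) = 1 := rfl
      rw [this, QuotientGroup.mk_one]
      exact one_mem _
    · intro y z hyc hzc hy hz hyz'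
      have hy'' : y ∈ commutator G := by rw [commutator_eq_closure]; exact hyc
      have hz'' : z ∈ commutator G := by rw [commutator_eq_closure]; exact hzc
      have : (⟨y * z, hyz'⟩ : ↥(commutator G)) = ⟨y, hy''⟩ * ⟨z, hz''⟩ := rfl
      rw [this, QuotientGroup.mk_mul]
      exact mul_mem (hy hy'') (hz hz'')
    · intro y hyc hy hyinv
      have hy'' : y ∈ commutator G := by rw [commutator_eq_closure]; exact hyc
      have : (⟨y⁻¹, hyinv⟩ : ↥(commutator G)) = (⟨y, hy''⟩)⁻¹ := rfl
      rw [this, QuotientGroup.mk_inv]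
      exact inv_mem (hy hy'')
  -- extraction
  obtain ⟨T, hTS, hTcard, hTgen⟩ := exists_gen_subset hp hUisP hScomm (SF.image gq)
    ((Finset.card_image_le).trans hSFcard) hT₀gen
  have hTfun : ∀ t : {z : ↥(commutator G) ⧸ K // z ∈ T},
      ∃ x y : G, ∃ hxy : ⁅x, y⁆ ∈ commutator G,
        QuotientGroup.mk (⟨⁅x, y⁆, hxy⟩ : ↥(commutator G)) = (t : ↥(commutator G) ⧸ K) :=
    fun t => hTS t.2
  choose fa fb fh hmk using hTfun
  set xel : {z : ↥(commutator G) ⧸ K // z ∈ T} → ↥(commutator G) :=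
    fun t => ⟨⁅fa t, fb t⁆, fh t⟩ with hxel
  -- value subgroups
  set V : {z : ↥(commutator G) ⧸ K // z ∈ T} → Subgroup ↥(Subgroup.center G) :=
    fun t => XP.map (MonoidHom.eval (xel t)) with hV
  have hVle : ∀ t, V t ≤ (phiHom D hD' ⁅fa t, fb t⁆ (comm_mem_commutator _ _)).range := by
    rintro t χv ⟨χ, hχ, rfl⟩
    obtain ⟨u, hu⟩ := hXPle hχ
    exact ⟨u, by rw [← hu]; rfl⟩
  have hVcard : ∀ t, Nat.card (V t) ≤ p ^ (2 * n.factorization p) := by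
    intro t
    have hdvd : Nat.card (V t) ∣ n ^ 2 :=
      (Subgroup.card_dvd_of_le (hVle t)).trans (card_phi_range_dvd D hD' (fa t) (fb t))
    have hVp : IsPGroup p (V t) := hXPp.map _
    obtain ⟨a, ha⟩ := IsPGroup.iff_card.mp hVp
    rw [ha] at hdvd ⊢
    have : a ≤ (n ^ 2).factorization p :=
      (Nat.Prime.pow_dvd_iff_le_factorization hp (pow_ne_zero _ hn0)).mp hdvd
    rw [Nat.factorization_pow, Finsupp.smul_apply, smul_eq_mul] at this
    exact Nat.pow_le_pow_right hp.pos this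
  -- the injection
  set F : XP → (∀ t : {z : ↥(commutator G) ⧸ K // z ∈ T}, ↥(V t)) :=
    fun χ t => ⟨MonoidHom.eval (xel t) χ.1, Subgroup.mem_map_of_mem _ χ.2⟩ with hF
  have hFinj : Function.Injective F := by
    intro χ χ' heq
    have hval : ∀ t, (χ : A) (xel t) = (χ' : A) (xel t) := by
      intro t
      have := congrFun heq t
      exact congrArg Subtype.val this
    set ψ : A := (χ : A) * (χ' : A)⁻¹ with hψ
    have hψXP : ψ ∈ XP := mul_mem χ.2 (inv_mem χ'.2)
    have hψ1 : ∀ t, ψ (xel t) = 1 := by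
      intro t
      rw [hψ, MonoidHom.mul_apply, MonoidHom.inv_apply, hval t, mul_inv_cancel]
    -- closure of the xel's together with K is everything
    have htop : Subgroup.closure (Set.range xel) ⊔ K = ⊤ := by
      have h1 : Subgroup.map (QuotientGroup.mk' K) (Subgroup.closure (Set.range xel)) = ⊤ := by
        rw [MonoidHom.map_closure]
        have himg : (⇑(QuotientGroup.mk' K)) '' (Set.range xel) =
            (T : Set (↥(commutator G) ⧸ K)) := by
          ext u
          constructor
          · rintro ⟨z, ⟨t, rfl⟩, rfl⟩
            have := hmk t
            simp only [QuotientGroup.coe_mk']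
            rw [this]
            exact t.2
          · intro hu
            exact ⟨xel ⟨u, hu⟩, ⟨⟨u, hu⟩, rfl⟩, hmk ⟨u, hu⟩⟩
        rw [himg, hTgen]
      have h2 := Subgroup.comap_map_eq (QuotientGroup.mk' K) (Subgroup.closure (Set.range xel))
      rw [h1, Subgroup.comap_top, QuotientGroup.ker_mk'] at h2
      exact h2.symm
    have hker : ∀ z : ↥(commutator G), ψ z = 1 := by
      have hle : Subgroup.closure (Set.range xel) ⊔ K ≤ ψ.ker := by
        refine sup_le ?_ ?_
        · rw [Subgroup.closure_le]
          rintro z ⟨t, rfl⟩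
          exact hψ1 t
        · intro z hz
          rw [MonoidHom.mem_ker]
          exact (hKmem.mp hz) ψ hψXP
      rw [htop] at hle
      intro z
      exact MonoidHom.mem_ker.mp (hle (Subgroup.mem_top z))
    have : (χ : A) = (χ' : A) := by
      ext z
      have h3 := hker z
      rw [hψ, MonoidHom.mul_apply, MonoidHom.inv_apply, mul_inv_eq_one] at h3
      exact congrArg Subtype.val h3
    exact Subtype.ext this
  -- count
  have hcount : Nat.card XP ≤
      ∏ t : {z : ↥(commutator G) ⧸ K // z ∈ T}, Nat.card (V t) := by
    have := Nat.card_le_card_of_injective F hFinj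
    rwa [Nat.card_pi] at this
  refine hcount.trans ?_
  calc ∏ t : {z : ↥(commutator G) ⧸ K // z ∈ T}, Nat.card (V t)
      ≤ ∏ _t : {z : ↥(commutator G) ⧸ K // z ∈ T}, p ^ (2 * n.factorization p) :=
        Finset.prod_le_prod (fun _ _ => Nat.zero_le _) (fun t _ => hVcard t)
    _ = (p ^ (2 * n.factorization p)) ^ (Fintype.card {z : ↥(commutator G) ⧸ K // z ∈ T}) := by
        rw [Finset.prod_const, Finset.card_univ]
    _ = (p ^ (2 * n.factorization p)) ^ T.card := by rw [Fintype.card_coe]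
    _ ≤ (p ^ (2 * n.factorization p)) ^ r :=
        Nat.pow_le_pow_right (Nat.pos_of_ne_zero (pow_ne_zero _ hp.pos.ne')) hTcard
    _ = p ^ (2 * r * n.factorization p) := by rw [← pow_mul]; ring_nf
end

section
/- Let G be a finite p-group with Z = G' ∩ Z(G) and rk(G'/Z) = r. Then rk(C_G(G')/Z_2(G)) ≤ r². -/
open Subgroup
open scoped commutatorElement


def AllGen (G : Type*) [Group G] (n : ℕ) : Prop :=
  ∀ H : Subgroup G, ∃ S : Finset G, S.card ≤ n ∧ Subgroup.closure (S : Set G) = H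

section
variable {G H : Type*} [Group G] [Group H]

lemma allGen_of_mulEquiv (e : G ≃* H) {n : ℕ} (h : AllGen G n) : AllGen H n := by
  classical
  intro K
  obtain ⟨S, hS, hcl⟩ := h (K.comap e.toMonoidHom)
  refine ⟨S.image e, (Finset.card_image_le).trans hS, ?_⟩
  have : ((S.image e : Finset H) : Set H) = e '' (S : Set G) := by
    ext x; simp
  rw [this]
  have : (⇑e '' (S : Set G)) = (⇑e.toMonoidHom '' (S : Set G)) := rfl
  rw [this, ← MonoidHom.map_closure e.toMonoidHom, hcl,
    Subgroup.map_comap_eq_self_of_surjective e.surjective]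

lemma allGen_prod {a b : ℕ} (hG : AllGen G a) (hH : AllGen H b) :
    AllGen (G × H) (a + b) := by
  classical
  intro K
  obtain ⟨S1, hS1, hcl1⟩ := hG (K.map (MonoidHom.fst G H))
  obtain ⟨S2, hS2, hcl2⟩ := hH (K.comap (MonoidHom.inr G H))
  -- lift S1 into K
  have hS1K : ∀ s ∈ S1, s ∈ K.map (MonoidHom.fst G H) := by
    intro s hs; rw [← hcl1]; exact subset_closure hs
  choose lift hliftK hlift using fun (s : G) (hs : s ∈ K.map (MonoidHom.fst G H)) =>
    Subgroup.mem_map.mp hs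
  classical
  let L1 : Finset (G × H) := S1.attach.image (fun s => lift s.1 (hS1K s.1 s.2))
  let L2 : Finset (G × H) := S2.image (MonoidHom.inr G H)
  refine ⟨L1 ∪ L2, ?_, ?_⟩
  · calc (L1 ∪ L2).card ≤ L1.card + L2.card := Finset.card_union_le _ _
      _ ≤ S1.card + S2.card := by
          gcongr
          · exact (Finset.card_image_le).trans (by simp)
          · exact Finset.card_image_le
      _ ≤ a + b := Nat.add_le_add hS1 hS2
  · apply le_antisymm
    · rw [Subgroup.closure_le]
      intro x hx
      simp only [Finset.coe_union, Set.mem_union, L1, L2, Finset.coe_image, Set.mem_image] at hx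
      rcases hx with hx | hx
      · obtain ⟨s, _, rfl⟩ := hx; exact hliftK _ _
      · obtain ⟨s, hs, rfl⟩ := hx
        have : s ∈ K.comap (MonoidHom.inr G H) := by rw [← hcl2]; exact subset_closure hs
        exact this
    · intro x hx
      -- first component
      have h1 : x.1 ∈ Subgroup.closure (S1 : Set G) := by
        rw [hcl1]; exact ⟨x, hx, rfl⟩
      have hmap : Subgroup.closure (S1 : Set G) ≤
          (Subgroup.closure ((L1 ∪ L2 : Finset (G × H)) : Set (G × H))).map (MonoidHom.fst G H) := by
        rw [Subgroup.closure_le]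
        intro s hs
        refine ⟨lift s (hS1K s hs), subset_closure ?_, hlift s (hS1K s hs)⟩
        simp only [Finset.coe_union, Set.mem_union, L1, Finset.coe_image, Set.mem_image]
        exact Or.inl ⟨⟨s, hs⟩, Finset.mem_attach _ _, rfl⟩
      obtain ⟨c, hc, hcx⟩ := hmap h1
      -- x * c⁻¹ has trivial first component
      have hxc : x * c⁻¹ ∈ K := by
        refine mul_mem hx (inv_mem ?_)
        have : Subgroup.closure ((L1 ∪ L2 : Finset (G × H)) : Set (G × H)) ≤ K := by
          rw [Subgroup.closure_le]
          intro y hy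
          simp only [Finset.coe_union, Set.mem_union, L1, L2, Finset.coe_image, Set.mem_image] at hy
          rcases hy with hy | hy
          · obtain ⟨s, _, rfl⟩ := hy; exact hliftK _ _
          · obtain ⟨s, hs, rfl⟩ := hy
            have : s ∈ K.comap (MonoidHom.inr G H) := by rw [← hcl2]; exact subset_closure hs
            exact this
        exact this hc
      have hfst : (x * c⁻¹).1 = 1 := by
        have : c.1 = x.1 := hcx
        simp [Prod.fst_mul, this]
      have h2 : (x * c⁻¹).2 ∈ Subgroup.closure (S2 : Set H) := by
        rw [hcl2]
        simpa using (show MonoidHom.inr G H (x*c⁻¹).2 ∈ K by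
          rwa [show MonoidHom.inr G H (x*c⁻¹).2 = x * c⁻¹ by
            simp [MonoidHom.inr_apply, Prod.ext_iff, hfst]])
      have h2' : x * c⁻¹ ∈ Subgroup.closure ((L1 ∪ L2 : Finset (G × H)) : Set (G × H)) := by
        have : x * c⁻¹ = MonoidHom.inr G H (x * c⁻¹).2 := by
          simp [MonoidHom.inr_apply, Prod.ext_iff, hfst]
        rw [this]
        have hm : Subgroup.closure (S2 : Set H) ≤
            (Subgroup.closure ((L1 ∪ L2 : Finset (G × H)) : Set (G × H))).comap
              (MonoidHom.inr G H) := by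
          rw [Subgroup.closure_le]
          intro s hs
          apply Subgroup.subset_closure
          simp only [Finset.coe_union, Set.mem_union, L2, Finset.coe_image, Set.mem_image]
          exact Or.inr ⟨s, hs, rfl⟩
        exact hm h2
      have := mul_mem h2' hc
      simpa using this
end



lemma allGen_subsingleton (G : Type*) [Group G] [Subsingleton G] : AllGen G 0 := by
  intro K
  refine ⟨∅, le_rfl, ?_⟩
  apply Subgroup.ext
  intro x
  simp [Subsingleton.elim x 1, one_mem]

def piSuccEquiv (A : Type*) [Group A] (n : ℕ) : (Fin (n+1) → A) ≃* A × (Fin n → A) :=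
  { (Fin.consEquiv fun _ : Fin (n+1) => A).symm with
    map_mul' := fun f g => rfl }

lemma allGen_pi {A : Type*} [Group A] {r : ℕ} (hA : AllGen A r) :
    ∀ k : ℕ, AllGen (Fin k → A) (k * r)
  | 0 => by
      have : Subsingleton (Fin 0 → A) := by
        constructor; intro a b; funext i; exact i.elim0
      simpa using allGen_subsingleton _
  | (k+1) => by
      have hk := allGen_pi hA k
      have : AllGen (A × (Fin k → A)) (r + k * r) := allGen_prod hA hk
      have he := allGen_of_mulEquiv (piSuccEquiv A k).symm this
      have harith : r + k * r = (k+1) * r := by ring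
      rwa [harith] at he


section generic
variable {H : Type*} [Group H]

lemma closure_comm {S : Set H} (h : ∀ a ∈ S, ∀ b ∈ S, a * b = b * a) :
    ∀ x ∈ Subgroup.closure S, ∀ y ∈ Subgroup.closure S, x * y = y * x := by
  intro x hx y hy
  refine Subgroup.closure_induction₂ (k := S)
    (p := fun a b _ _ => a * b = b * a) (fun a b ha hb => h a ha b hb) ?_ ?_ ?_ ?_ ?_ ?_ hx hy
  · intro a _; rw [one_mul, mul_one]
  · intro a _; rw [one_mul, mul_one]
  · intro a b c _ _ _ hac hbc
    rw [mul_assoc, hbc, ← mul_assoc, hac, mul_assoc]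
  · intro b c a _ _ _ hab hac
    rw [← mul_assoc, hab, mul_assoc, hac, ← mul_assoc]
  · intro a b _ _ hab
    exact (Commute.inv_left (hab : Commute a b) : Commute a⁻¹ b)
  · intro a b _ _ hab
    exact (Commute.inv_right (hab : Commute a b) : Commute a b⁻¹)

lemma pow_mod_of {M : Type*} [Monoid M] {x : M} {q : ℕ} (h : x ^ q = 1) (n : ℕ) :
    x ^ n = x ^ (n % q) := by
  conv_lhs => rw [← Nat.mod_add_div n q, pow_add, pow_mul, h, one_pow, mul_one]
end generic


section core

variable {G : Type*} [Group G]

local notation "C" => Subgroup.centralizer (commutator G : Set G)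

lemma comm_CG {x a : G} (hx : x ∈ C) (ha : a ∈ commutator G) : a * x = x * a :=
  Subgroup.mem_centralizer_iff.mp hx a ha

lemma comm_mem_commutator_s18 (x g : G) : ⁅x, g⁆ ∈ commutator G :=
  Subgroup.commutator_mem_commutator (Subgroup.mem_top x) (Subgroup.mem_top g)

lemma centralizer_commutator_normal : (Subgroup.centralizer (commutator G : Set G)).Normal := by
  constructor
  intro c hc g
  rw [Subgroup.mem_centralizer_iff] at *
  intro a ha
  have h2 : g⁻¹ * a * g ∈ commutator G := by
    simpa using Subgroup.Normal.conj_mem (inferInstance : (commutator G).Normal) a ha g⁻¹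
  have key : a * (g * c * g⁻¹) = g * ((g⁻¹ * a * g) * c) * g⁻¹ := by group
  rw [key, hc _ h2]; group

lemma comm_mem_C {x : G} (hx : x ∈ C) (g : G) : ⁅x, g⁆ ∈ C := by
  have h1 : g * x⁻¹ * g⁻¹ ∈ C := by
    have := centralizer_commutator_normal (G := G)
    exact this.conj_mem _ (inv_mem hx) g
  have : ⁅x, g⁆ = x * (g * x⁻¹ * g⁻¹) := by group
  rw [this]
  exact mul_mem hx h1

-- the commutator-with-g map is multiplicative on C
lemma comm_mul_left {x y : G} (hx : x ∈ C) (hy : y ∈ C) (g : G) :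
    ⁅x * y, g⁆ = ⁅x, g⁆ * ⁅y, g⁆ := by
  have e1 : ⁅x * y, g⁆ = x * ⁅y, g⁆ * x⁻¹ * ⁅x, g⁆ := by group
  have e2 : x * ⁅y, g⁆ * x⁻¹ = ⁅y, g⁆ := by
    have := comm_CG hx (comm_mem_commutator_s18 y g)
    -- ⁅y,g⁆ * x = x * ⁅y,g⁆
    rw [← this]; group
  rw [e1, e2]
  -- now need ⁅y,g⁆ * ⁅x,g⁆ = ⁅x,g⁆ * ⁅y,g⁆
  have := comm_CG (comm_mem_C hy g) (comm_mem_commutator_s18 x g)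
  rw [this]

-- Hall-Witt style fact
lemma hw_fact {x h : G} (hx : x ∈ C) (hz : ⁅x, h⁆ ∈ Subgroup.center G) (g : G) :
    ⁅⁅x, g⁆, h⁆ = 1 := by
  have e1 : ∀ a b : G, ⁅x, a * b⁆ = ⁅x, a⁆ * (a * ⁅x, b⁆ * a⁻¹) := by intros; group
  -- step 1 : ⁅x, h*g*h⁻¹⁆ = ⁅x, g⁆
  have hcomm1 : ⁅x, ⁅h, g⁆⁆ = 1 := by
    rw [commutatorElement_eq_one_iff_mul_comm]
    exact (comm_CG hx (comm_mem_commutator_s18 h g)).symm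
  have s1 : ⁅x, h * g * h⁻¹⁆ = ⁅x, g⁆ := by
    have hconj : h * g * h⁻¹ = ⁅h, g⁆ * g := by group
    rw [hconj, e1, hcomm1, one_mul]
    have := comm_CG (comm_mem_C hx g) (comm_mem_commutator_s18 h g)
    rw [this]; group
  -- step 2: two expansions of ⁅x, h*g⁆
  have s2 : ⁅x, h * g⁆ = ⁅x, h⁆ * (h * ⁅x, g⁆ * h⁻¹) := e1 h g
  have s3 : ⁅x, h * g⁆ = ⁅x, g⁆ * ⁅x, h⁆ := by
    have hsplit : h * g = (h * g * h⁻¹) * h := by group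
    rw [hsplit, e1, s1]
    congr 1
    have := (Subgroup.mem_center_iff.mp hz) (h * g * h⁻¹)
    rw [this]; group
  have key : ⁅x, h⁆ * (h * ⁅x, g⁆ * h⁻¹) = ⁅x, g⁆ * ⁅x, h⁆ := by rw [← s2, s3]
  have hc := Subgroup.mem_center_iff.mp hz
  have key2 : h * ⁅x, g⁆ * h⁻¹ = ⁅x, g⁆ := by
    have := hc ⁅x, g⁆
    -- ⁅x,h⁆ * A = ⁅x,g⁆ * ⁅x,h⁆ = ⁅x,h⁆ * ⁅x,g⁆  ⇒ A = ⁅x,g⁆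
    have key3 : ⁅x, h⁆ * (h * ⁅x, g⁆ * h⁻¹) = ⁅x, h⁆ * ⁅x, g⁆ := by
      rw [key, ← this]
    exact mul_left_cancel key3
  rw [commutatorElement_eq_one_iff_mul_comm]
  conv_lhs => rw [← key2]
  group

lemma mem_Z2_iff {x : G} :
    x ∈ Subgroup.upperCentralSeries G 2 ↔ ∀ g : G, ⁅x, g⁆ ∈ Subgroup.center G := by
  have h2 : (2 : ℕ) = 1 + 1 := rfl
  rw [h2, Subgroup.mem_upperCentralSeries_succ_iff]
  simp only [Subgroup.upperCentralSeries_one]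

end core


section chainsec
variable {G : Type*} [Group G]

local notation "CC" => Subgroup.centralizer (commutator G : Set G)

-- from earlier parts (axiomatized here for speed)
def Dsub (G : Type*) [Group G] : Subgroup G :=
  Subgroup.centralizer (commutator G : Set G) ⊓ commutator G

lemma D_mul_comm (a b : ↥(Dsub G)) : a * b = b * a := by
  apply Subtype.ext
  exact (comm_CG a.2.1 b.2.2).symm

@[reducible]
def commGroupD (G : Type*) [Group G] : CommGroup ↥(Dsub G) :=
  { (inferInstance : Group ↥(Dsub G)) with mul_comm := D_mul_comm }

def psiD (g : G) : ↥(Dsub G) →* ↥(Dsub G) :=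
  MonoidHom.mk' (fun x => ⟨⁅(x : G), g⁆, ⟨comm_mem_C x.2.1 g, comm_mem_commutator_s18 _ g⟩⟩)
    (by
      intro a b
      apply Subtype.ext
      show ⁅((a*b : ↥(Dsub G)) : G), g⁆ = ⁅(a:G),g⁆ * ⁅(b:G),g⁆
      exact comm_mul_left a.2.1 b.2.1 g)

lemma chain_le_of_allGen [Finite G] {p r k : ℕ} [Fact p.Prime]
    (hA : AllGen (commutator G ⧸ (Subgroup.center G).subgroupOf (commutator G)) r)
    (g w : Fin k → G)
    (hwC : ∀ i, w i ∈ CC)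
    (hwG' : ∀ i, w i ∈ commutator G)
    (hwp : ∀ i, (w i) ^ p ∈ Subgroup.center G)
    (htri : ∀ i j, j < i → ⁅w i, g j⁆ = 1)
    (hnt : ∀ i, ⁅w i, g i⁆ ≠ 1) : k ≤ r := by
  classical
  haveI : NeZero p := ⟨(Fact.out : p.Prime).ne_zero⟩
  haveI : Fact (1 < p) := ⟨(Fact.out : p.Prime).one_lt⟩
  letI : CommGroup ↥(Dsub G) := commGroupD G
  set A := commutator G ⧸ (Subgroup.center G).subgroupOf (commutator G) with hAdef
  let φ : ↥(Dsub G) →* A :=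
    (QuotientGroup.mk' _).comp (Subgroup.inclusion inf_le_right)
  have hφ1 : ∀ d : ↥(Dsub G), φ d = 1 ↔ (d : G) ∈ Subgroup.center G := by
    intro d
    constructor
    · intro h
      have h2 : (Subgroup.inclusion (inf_le_right : Dsub G ≤ commutator G) d)
          ∈ (Subgroup.center G).subgroupOf (commutator G) :=
        (QuotientGroup.eq_one_iff _).mp h
      exact Subgroup.mem_subgroupOf.mp h2
    · intro h
      show QuotientGroup.mk' _ (Subgroup.inclusion _ d) = 1
      rw [QuotientGroup.mk'_apply, QuotientGroup.eq_one_iff]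
      exact Subgroup.mem_subgroupOf.mpr h
  let wD : Fin k → ↥(Dsub G) := fun i => ⟨w i, ⟨hwC i, hwG' i⟩⟩
  have hwDpow : ∀ (i : Fin k), ((wD i ^ p : ↥(Dsub G)) : G) = (w i) ^ p := by
    intro i; rfl
  have hbp : ∀ (i : Fin k) (u : G), (psiD u (wD i)) ^ p = 1 := by
    intro i u
    rw [← map_pow]
    apply Subtype.ext
    show ⁅((wD i ^ p : ↥(Dsub G)) : G), u⁆ = 1
    rw [hwDpow i, commutatorElement_eq_one_iff_mul_comm]
    exact (Subgroup.mem_center_iff.mp (hwp i) u).symm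
  -- key divisibility lemma
  have key : ∀ d : Fin k → ℤ, ((∏ i, wD i ^ d i : ↥(Dsub G)) : G) ∈ Subgroup.center G →
      ∀ j, (p : ℤ) ∣ d j := by
    intro d hd
    have main : ∀ n : ℕ, ∀ j : Fin k, (j : ℕ) = n → (p : ℤ) ∣ d j := by
      intro n
      induction n using Nat.strong_induction_on with
      | _ n IH =>
        intro j hj
        have h1 : psiD (g j) (∏ i, wD i ^ d i) = 1 := by
          apply Subtype.ext
          show ⁅((∏ i, wD i ^ d i : ↥(Dsub G)) : G), g j⁆ = 1
          rw [commutatorElement_eq_one_iff_mul_comm]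
          exact (Subgroup.mem_center_iff.mp hd (g j)).symm
        rw [map_prod] at h1
        have h2 : ∀ i : Fin k, psiD (g j) (wD i ^ d i) = (psiD (g j) (wD i)) ^ d i :=
          fun i => map_zpow _ _ _
        rw [Finset.prod_congr rfl (fun i _ => h2 i)] at h1
        have h3 : ∀ i ∈ Finset.univ, i ≠ j → (psiD (g j) (wD i)) ^ d i = 1 := by
          intro i _ hij
          rcases lt_or_gt_of_ne hij with hlt | hgt
          · obtain ⟨m, hm⟩ := IH (i : ℕ) (by rw [← hj]; exact hlt) i rfl
            rw [hm, zpow_mul, zpow_natCast, hbp i (g j), one_zpow]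
          · have hz : psiD (g j) (wD i) = 1 := by
              apply Subtype.ext
              show ⁅w i, g j⁆ = 1
              exact htri i j hgt
            rw [hz, one_zpow]
        rw [Finset.prod_eq_single j h3 (fun h => absurd (Finset.mem_univ j) h)] at h1
        have hne : psiD (g j) (wD j) ≠ 1 := by
          intro hcon
          exact hnt j (congrArg Subtype.val hcon)
        have hord : orderOf (psiD (g j) (wD j)) = p := by
          have hdvd : orderOf (psiD (g j) (wD j)) ∣ p :=
            orderOf_dvd_of_pow_eq_one (hbp j (g j))
          rcases (Nat.Prime.eq_one_or_self_of_dvd Fact.out _ hdvd) with h1' | h1'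
          · exact absurd (orderOf_eq_one_iff.mp h1') hne
          · exact h1'
        have hdd := orderOf_dvd_iff_zpow_eq_one.mpr h1
        rwa [hord] at hdd
    exact fun j => main (j : ℕ) j rfl
  -- the subgroup K of A
  let K : Subgroup A := Subgroup.closure (Set.range (fun i => φ (wD i)))
  let KD : Subgroup ↥(Dsub G) := Subgroup.closure (Set.range wD)
  have hKmap : K = KD.map φ := by
    rw [MonoidHom.map_closure]
    congr 1
    rw [← Set.range_comp]
    rfl
  have hιmem : ∀ c : Fin k → ZMod p, φ (∏ i, wD i ^ ((c i).val : ℤ)) ∈ K := by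
    intro c
    rw [hKmap]
    refine Subgroup.mem_map_of_mem φ ?_
    exact Subgroup.prod_mem _ (fun i _ =>
      Subgroup.zpow_mem _ (Subgroup.subset_closure (Set.mem_range_self i)) _)
  let ι : (Fin k → ZMod p) → ↥K := fun c => ⟨φ (∏ i, wD i ^ ((c i).val : ℤ)), hιmem c⟩
  have hinj : Function.Injective ι := by
    intro c c' hcc
    have hcc' : φ (∏ i, wD i ^ ((c i).val : ℤ)) = φ (∏ i, wD i ^ ((c' i).val : ℤ)) :=
      congrArg Subtype.val hcc
    have h0 : φ ((∏ i, wD i ^ ((c i).val : ℤ)) * (∏ i, wD i ^ ((c' i).val : ℤ))⁻¹) = 1 := by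
      rw [map_mul, map_inv, hcc', mul_inv_cancel]
    have hprod : (∏ i, wD i ^ ((c i).val : ℤ)) * (∏ i, wD i ^ ((c' i).val : ℤ))⁻¹
        = ∏ i, wD i ^ (((c i).val : ℤ) - ((c' i).val : ℤ)) := by
      rw [← Finset.prod_inv_distrib, ← Finset.prod_mul_distrib]
      refine Finset.prod_congr rfl (fun i _ => ?_)
      rw [← zpow_neg, ← zpow_add, sub_eq_add_neg]
    rw [hprod] at h0
    have hdvd := key _ ((hφ1 _).mp h0)
    funext j
    have hj := hdvd j
    have hcast : (((c j).val : ℤ) - ((c' j).val : ℤ) : ℤ) = 0 → (c j) = (c' j) := by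
      intro h
      have : ((c j).val : ℤ) = ((c' j).val : ℤ) := by linarith [sub_eq_zero.mp h]
      have hval : (c j).val = (c' j).val := by exact_mod_cast this
      have e1 : ((c j).val : ZMod p) = c j := ZMod.natCast_rightInverse (c j)
      have e2 : ((c' j).val : ZMod p) = c' j := ZMod.natCast_rightInverse (c' j)
      rw [← e1, ← e2, hval]
    -- use dvd with size bounds
    have hlt1 : ((c j).val : ℤ) < p := by exact_mod_cast ZMod.val_lt (c j)
    have hlt2 : ((c' j).val : ℤ) < p := by exact_mod_cast ZMod.val_lt (c' j)
    have hge1 : (0 : ℤ) ≤ ((c j).val : ℤ) := by positivity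
    have hge2 : (0 : ℤ) ≤ ((c' j).val : ℤ) := by positivity
    apply hcast
    rcases hj with ⟨m, hm⟩
    have hp0 : (0 : ℤ) < p := by exact_mod_cast (Fact.out : p.Prime).pos
    rcases lt_trichotomy m 0 with hmlt | hmeq | hmgt
    · nlinarith [hm]
    · rw [hmeq, mul_zero] at hm; exact hm
    · nlinarith [hm]
  have hcard1 : p ^ k ≤ Nat.card ↥K := by
    have hc := Nat.card_le_card_of_injective ι hinj
    calc p ^ k = Nat.card (Fin k → ZMod p) := by
          simp [Nat.card_pi, Nat.card_zmod]
      _ ≤ _ := hc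
  -- upper bound via generators
  obtain ⟨T, hTcard, hTcl⟩ := hA K
  have hTsub : (T : Set A) ⊆ K := by
    intro t ht
    rw [← hTcl]
    exact Subgroup.subset_closure ht
  have hKcomm : ∀ x ∈ K, ∀ y ∈ K, x * y = y * x := by
    apply closure_comm
    rintro a ⟨i, rfl⟩ b ⟨j, rfl⟩
    rw [← map_mul, ← map_mul, mul_comm]
  have hKp : ∀ x ∈ K, x ^ p = 1 := by
    intro x hx
    refine Subgroup.closure_induction ?_ ?_ ?_ ?_ hx
    · rintro a ⟨i, rfl⟩
      rw [← map_pow]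
      refine (hφ1 _).mpr ?_
      rw [hwDpow i]
      exact hwp i
    · exact one_pow p
    · intro a b ha hb hpa hpb
      have hab : Commute a b := hKcomm a ha b hb
      rw [hab.mul_pow, hpa, hpb, one_mul]
    · intro a _ hpa
      rw [inv_pow, hpa, inv_one]
  letI : CommGroup ↥K :=
    { (inferInstance : Group ↥K) with
      mul_comm := fun a b => Subtype.ext (hKcomm a a.2 b b.2) }
  have hKelemp : ∀ z : ↥K, z ^ p = 1 := by
    intro z
    apply Subtype.ext
    show ((z : A)) ^ p = 1
    exact hKp z z.2
  let σ : ({x // x ∈ T} → ZMod p) → ↥K :=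
    fun c => ∏ t : {x // x ∈ T}, (⟨t.1, hTsub t.2⟩ : ↥K) ^ ((c t).val)
  have hσhom : ∀ c1 c2, σ (c1 + c2) = σ c1 * σ c2 := by
    intro c1 c2
    rw [← Finset.prod_mul_distrib]
    refine Finset.prod_congr rfl (fun t _ => ?_)
    have hep : ((⟨t.1, hTsub t.2⟩ : ↥K)) ^ p = 1 := hKelemp _
    rw [Pi.add_apply, ZMod.val_add, ← pow_mod_of hep, pow_add]
  have hσsurj : Function.Surjective σ := by
    intro z
    have hz : (z : A) ∈ Subgroup.closure (T : Set A) := by rw [hTcl]; exact z.2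
    have : ∃ c, ((σ c : ↥K) : A) = (z : A) := by
      refine Subgroup.closure_induction
        (p := fun a _ => ∃ c, ((σ c : ↥K) : A) = a) ?_ ?_ ?_ ?_ hz
      · intro a ha
        refine ⟨Pi.single (M := fun _ : {x // x ∈ T} => ZMod p) ⟨a, ha⟩ (1 : ZMod p), ?_⟩
        have hσ : σ (Pi.single (M := fun _ : {x // x ∈ T} => ZMod p) ⟨a, ha⟩ (1 : ZMod p))
            = (⟨a, hTsub ha⟩ : ↥K) := by
          show (∏ t : {x // x ∈ T}, (⟨t.1, hTsub t.2⟩ : ↥K)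
              ^ (((Pi.single (M := fun _ : {x // x ∈ T} => ZMod p) ⟨a, ha⟩
                (1 : ZMod p)) t).val)) = (⟨a, hTsub ha⟩ : ↥K)
          rw [Finset.prod_eq_single (⟨a, ha⟩ : {x // x ∈ T})]
          · rw [Pi.single_eq_same, ZMod.val_one, pow_one]
          · intro b _ hb
            rw [Pi.single_eq_of_ne hb, ZMod.val_zero, pow_zero]
          · intro h; exact absurd (Finset.mem_univ _) h
        rw [hσ]
      · refine ⟨0, ?_⟩
        show ((∏ t : {x // x ∈ T}, (⟨t.1, hTsub t.2⟩ : ↥K)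
            ^ (((0 : {x // x ∈ T} → ZMod p)) t).val : ↥K) : A) = 1
        simp only [Pi.zero_apply, ZMod.val_zero, pow_zero, Finset.prod_const_one,
          OneMemClass.coe_one]
      · rintro a b _ _ ⟨c1, hc1⟩ ⟨c2, hc2⟩
        exact ⟨c1 + c2, by rw [hσhom, Subgroup.coe_mul, hc1, hc2]⟩
      · rintro a _ ⟨c, hc⟩
        refine ⟨-c, ?_⟩
        have hσinv : σ (-c) = (σ c)⁻¹ := by
          have h1 : σ c * σ (-c) = 1 := by
            rw [← hσhom]
            simp only [add_neg_cancel]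
            show (∏ t : {x // x ∈ T}, (⟨t.1, hTsub t.2⟩ : ↥K)
                ^ (((0 : {x // x ∈ T} → ZMod p)) t).val) = 1
            simp only [Pi.zero_apply, ZMod.val_zero, pow_zero, Finset.prod_const_one]
          exact eq_inv_of_mul_eq_one_right ((mul_comm (σ (-c)) (σ c)) ▸ h1)
        rw [hσinv, ← hc]
        rfl
    obtain ⟨c, hc⟩ := this
    exact ⟨c, Subtype.ext hc⟩
  have hcard2 : Nat.card ↥K ≤ p ^ r := by
    have hc := Nat.card_le_card_of_surjective σ hσsurj
    calc Nat.card ↥K ≤ Nat.card ({x // x ∈ T} → ZMod p) := hc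
      _ = p ^ T.card := by simp [Nat.card_pi, Nat.card_zmod]
      _ ≤ p ^ r := Nat.pow_le_pow_right (Fact.out : p.Prime).pos hTcard
  have := hcard1.trans hcard2
  exact (Nat.pow_le_pow_iff_right (Fact.out : p.Prime).one_lt).mp this

end chainsec


section greedy
variable {G : Type*} [Group G]

local notation "CC" => Subgroup.centralizer (commutator G : Set G)

lemma comm_pow_left {x : G} (hx : x ∈ CC) (g : G) :
    ∀ n : ℕ, ⁅x ^ n, g⁆ = ⁅x, g⁆ ^ n := by
  intro n
  induction n with
  | zero => simp
  | succ n ih =>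
      rw [pow_succ, comm_mul_left (pow_mem hx n) hx, ih, pow_succ]

lemma exists_cut {G : Type*} [Group G] [Finite G] {p r : ℕ} [Fact p.Prime]
    (hp : IsPGroup p G)
    (hA : AllGen (commutator G ⧸ (Subgroup.center G).subgroupOf (commutator G)) r) :
    ∃ (k : ℕ) (g : Fin k → G), k ≤ r ∧
      ∀ x ∈ Subgroup.centralizer (commutator G : Set G),
        (∀ i, ⁅x, g i⁆ ∈ Subgroup.center G) → x ∈ Subgroup.upperCentralSeries G 2 := by
  classical
  -- the chain property
  set P : ℕ → Prop := fun k => ∃ (g w : Fin k → G),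
    (∀ i, w i ∈ Subgroup.centralizer (commutator G : Set G)) ∧ (∀ i, w i ∈ commutator G) ∧
    (∀ i, (w i) ^ p ∈ Subgroup.center G) ∧
    (∀ i j, j < i → ⁅w i, g j⁆ = 1) ∧ (∀ i, ⁅w i, g i⁆ ≠ 1) with hPdef
  have hP0 : P 0 := ⟨Fin.elim0, Fin.elim0, fun i => i.elim0, fun i => i.elim0,
    fun i => i.elim0, fun i => i.elim0, fun i => i.elim0⟩
  have hPle : ∀ k, P k → k ≤ r := by
    rintro k ⟨g, w, h1, h2, h3, h4, h5⟩
    exact chain_le_of_allGen hA g w h1 h2 h3 h4 h5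
  set km := Nat.findGreatest P r with hkm
  have hPkm : P km := Nat.findGreatest_spec (Nat.zero_le r) hP0
  have hmax : ¬ P (km + 1) := by
    intro hP1
    have h1 : km + 1 ≤ r := hPle _ hP1
    have := Nat.le_findGreatest h1 hP1
    omega
  obtain ⟨g, w, hwC, hwG', hwp, htri, hnt⟩ := hPkm
  refine ⟨km, g, hPle _ ⟨g, w, hwC, hwG', hwp, htri, hnt⟩, ?_⟩
  intro x hx hxg
  by_contra hxZ2
  -- socle adjustment
  have hex : ∃ n, x ^ (p ^ n) ∈ Subgroup.upperCentralSeries G 2 := by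
    obtain ⟨n, hn⟩ := hp x
    exact ⟨n, by rw [hn]; exact one_mem _⟩
  set n1 := Nat.find hex with hn1
  have hn1spec := Nat.find_spec hex
  have hn1pos : 0 < n1 := by
    rcases Nat.eq_zero_or_pos n1 with h0 | h0
    · exfalso
      apply hxZ2
      have := hn1spec
      rw [← hn1] at this
      rw [h0] at this
      simpa using this
    · exact h0
  set t := n1 - 1 with ht
  have htlt : t < n1 := by omega
  have hx't : ¬ (x ^ (p ^ t) ∈ Subgroup.upperCentralSeries G 2) := Nat.find_min hex htlt
  set x' := x ^ (p ^ t) with hx'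
  have hx'C : x' ∈ Subgroup.centralizer (commutator G : Set G) := pow_mem hx _
  have hx'p : x' ^ p ∈ Subgroup.upperCentralSeries G 2 := by
    have : x' ^ p = x ^ (p ^ (t + 1)) := by
      rw [hx', ← pow_mul, ← pow_succ]
    rw [this, show t + 1 = n1 by omega]
    exact hn1spec
  have hx'g : ∀ i, ⁅x', g i⁆ ∈ Subgroup.center G := by
    intro i
    rw [hx', comm_pow_left hx (g i)]
    exact pow_mem (hxg i) _
  -- witness construction
  have hx'nZ : ∃ v, ⁅x', v⁆ ∉ Subgroup.center G := by
    by_contra hcon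
    push_neg at hcon
    exact hx't (mem_Z2_iff.mpr hcon)
  obtain ⟨v, hv⟩ := hx'nZ
  set y := ⁅x', v⁆ with hy
  have hyu : ∃ u : G, ⁅y, u⁆ ≠ 1 := by
    by_contra hcon
    push_neg at hcon
    apply hv
    rw [Subgroup.mem_center_iff]
    intro u
    have := hcon u
    rw [commutatorElement_eq_one_iff_mul_comm] at this
    exact this.symm
  obtain ⟨u, hu⟩ := hyu
  -- extend the chain
  apply hmax
  refine ⟨Fin.snoc g u, Fin.snoc w y, ?_, ?_, ?_, ?_, ?_⟩
  · intro i
    refine Fin.lastCases ?_ (fun i0 => ?_) i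
    · rw [Fin.snoc_last]; exact comm_mem_C hx'C v
    · rw [Fin.snoc_castSucc]; exact hwC i0
  · intro i
    refine Fin.lastCases ?_ (fun i0 => ?_) i
    · rw [Fin.snoc_last]; exact comm_mem_commutator_s18 x' v
    · rw [Fin.snoc_castSucc]; exact hwG' i0
  · intro i
    refine Fin.lastCases ?_ (fun i0 => ?_) i
    · rw [Fin.snoc_last, hy, ← comm_pow_left hx'C v p]
      exact mem_Z2_iff.mp hx'p v
    · rw [Fin.snoc_castSucc]; exact hwp i0
  · intro i
    refine Fin.lastCases ?_ (fun i0 => ?_) i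
    · intro j hij
      have hjlt : (j : ℕ) < km := by simpa [Fin.lt_def] using hij
      have hje : j = Fin.castSucc ⟨(j : ℕ), hjlt⟩ := by ext; simp
      rw [Fin.snoc_last, hje, Fin.snoc_castSucc, hy]
      exact hw_fact hx'C (hx'g ⟨(j : ℕ), hjlt⟩) v
    · intro j hij
      have hjlt : (j : ℕ) < (i0 : ℕ) := by simpa [Fin.lt_def] using hij
      have hjlt2 : (j : ℕ) < km := lt_trans hjlt i0.isLt
      have hje : j = Fin.castSucc ⟨(j : ℕ), hjlt2⟩ := by ext; simp
      rw [Fin.snoc_castSucc, hje, Fin.snoc_castSucc]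
      exact htri i0 ⟨(j : ℕ), hjlt2⟩ (by simpa [Fin.lt_def] using hjlt)
  · intro i
    refine Fin.lastCases ?_ (fun i0 => ?_) i
    · rw [Fin.snoc_last, Fin.snoc_last]; exact hu
    · rw [Fin.snoc_castSucc, Fin.snoc_castSucc]; exact hnt i0
end greedy


-- rank of a finite group: the defining set is nonempty and thus sInf is attained
lemma grpRank_allGen (A : Type*) [Group A] [Finite A] : AllGen A (grpRank A) := by
  classical
  have hne : {r : ℕ | ∀ H : Subgroup A, ∃ S : Finset A,
      S.card ≤ r ∧ Subgroup.closure (S : Set A) = H}.Nonempty := by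
    haveI := Fintype.ofFinite A
    refine ⟨Fintype.card A, fun H => ⟨(H : Set A).toFinset, Finset.card_le_univ _, ?_⟩⟩
    rw [Set.coe_toFinset]
    exact Subgroup.closure_eq H
  exact Nat.sInf_mem hne

theorem stmt_18 (p : ℕ) [Fact p.Prime] (G : Type*) [Group G] [Finite G]
    (hp : IsPGroup p G) (r : ℕ)
    (hr : grpRank (commutator G ⧸ (Subgroup.center G).subgroupOf (commutator G)) = r) :
    grpRank (Subgroup.centralizer (commutator G : Set G) ⧸
        (Subgroup.upperCentralSeries G 2).subgroupOf (Subgroup.centralizer (commutator G : Set G))) ≤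
      r ^ 2 := by
  classical
  have hA : AllGen (commutator G ⧸ (Subgroup.center G).subgroupOf (commutator G)) r := by
    have := grpRank_allGen (commutator G ⧸ (Subgroup.center G).subgroupOf (commutator G))
    rwa [hr] at this
  obtain ⟨k, g, hkr, hcut⟩ := exists_cut hp hA
  have hpi : AllGen (Fin k → (commutator G ⧸ (Subgroup.center G).subgroupOf (commutator G)))
      (k * r) := allGen_pi hA k
  -- the homomorphism Ψ
  set A := commutator G ⧸ (Subgroup.center G).subgroupOf (commutator G) with hAdef
  set CG := Subgroup.centralizer (commutator G : Set G) with hCG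
  set Z2 := Subgroup.upperCentralSeries G 2 with hZ2
  let Ψ : ↥CG →* (Fin k → A) := MonoidHom.mk'
    (fun x => fun i => QuotientGroup.mk' ((Subgroup.center G).subgroupOf (commutator G))
      ⟨⁅(x : G), g i⁆, comm_mem_commutator_s18 _ _⟩)
    (by
      intro a b
      funext i
      show QuotientGroup.mk' _ (⟨⁅((a * b : ↥CG) : G), g i⁆, _⟩ : ↥(commutator G)) =
        QuotientGroup.mk' ((Subgroup.center G).subgroupOf (commutator G)) (⟨⁅(a : G), g i⁆, _⟩ : ↥(commutator G)) * QuotientGroup.mk' ((Subgroup.center G).subgroupOf (commutator G)) (⟨⁅(b : G), g i⁆, _⟩ : ↥(commutator G))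
      rw [← map_mul]
      congr 1
      apply Subtype.ext
      exact comm_mul_left a.2 b.2 (g i))
  have hker : ∀ x : ↥CG, Ψ x = 1 → x ∈ Z2.subgroupOf CG := by
    intro x hx
    have hxi : ∀ i, ⁅(x : G), g i⁆ ∈ Subgroup.center G := by
      intro i
      have h1 : (QuotientGroup.mk' ((Subgroup.center G).subgroupOf (commutator G))
          ⟨⁅(x : G), g i⁆, comm_mem_commutator_s18 _ _⟩) = 1 := congrFun hx i
      rw [QuotientGroup.mk'_apply, QuotientGroup.eq_one_iff] at h1
      exact Subgroup.mem_subgroupOf.mp h1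
    exact Subgroup.mem_subgroupOf.mpr (hcut (x : G) x.2 hxi)
  -- conclude
  apply Nat.sInf_le
  intro H
  set π := QuotientGroup.mk' (Z2.subgroupOf CG) with hπ
  set Ht := H.comap π with hHt
  obtain ⟨T, hTcard, hTcl⟩ := hpi (Ht.map Ψ)
  have hTmem : ∀ t : {t // t ∈ T}, (t : Fin k → A) ∈ Ht.map Ψ := by
    intro t
    rw [← hTcl]
    exact Subgroup.subset_closure t.2
  choose lift hliftH hlift using fun t : {t // t ∈ T} => Subgroup.mem_map.mp (hTmem t)
  let S : Finset (↥CG ⧸ Z2.subgroupOf CG) := T.attach.image (fun t => π (lift t))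
  refine ⟨S, ?_, ?_⟩
  · calc S.card ≤ T.attach.card := Finset.card_image_le
      _ = T.card := Finset.card_attach
      _ ≤ k * r := hTcard
      _ ≤ r * r := Nat.mul_le_mul_right r hkr
      _ = r ^ 2 := (sq r).symm
  · apply le_antisymm
    · rw [Subgroup.closure_le]
      intro q hq
      simp only [S, Finset.coe_image, Set.mem_image] at hq
      obtain ⟨t, _, rfl⟩ := hq
      exact hliftH t
    · intro q hq
      obtain ⟨x, rfl⟩ := QuotientGroup.mk'_surjective (Z2.subgroupOf CG) q
      have hxHt : x ∈ Ht := by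
        rw [hHt]
        exact hq
      -- P := closure of the lifts
      set P : Subgroup ↥CG := Subgroup.closure (Set.range lift) with hP
      have hPmap : Subgroup.closure ((T : Set (Fin k → A))) ≤ P.map Ψ := by
        rw [Subgroup.closure_le]
        intro t ht
        exact ⟨lift ⟨t, ht⟩, Subgroup.subset_closure (Set.mem_range_self _),
          hlift ⟨t, ht⟩⟩
      have hΨx : Ψ x ∈ P.map Ψ := by
        apply hPmap
        rw [hTcl]
        exact Subgroup.mem_map_of_mem Ψ hxHt
      obtain ⟨y, hyP, hyx⟩ := hΨx
      have hxy : π x = π y := by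
        have h1 : Ψ (x * y⁻¹) = 1 := by
          rw [map_mul, map_inv, hyx, mul_inv_cancel]
        have h2 : x * y⁻¹ ∈ Z2.subgroupOf CG := hker _ h1
        have h3 : π (x * y⁻¹) = 1 := by
          rw [QuotientGroup.mk'_apply, QuotientGroup.eq_one_iff]
          exact h2
        rw [map_mul, map_inv] at h3
        exact mul_inv_eq_one.mp h3
      rw [hxy]
      have : P ≤ (Subgroup.closure (S : Set (↥CG ⧸ Z2.subgroupOf CG))).comap π := by
        rw [hP, Subgroup.closure_le]
        rintro z ⟨t, rfl⟩
        apply Subgroup.subset_closure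
        simp only [S, Finset.coe_image, Set.mem_image]
        exact ⟨t, by simp⟩
      exact this hyP
end
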